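/- arXiv:1304.1772 — 5 statements merged into one kernel-verified Lean document; each statement's English description precedes it below -/
import Mathlib

section
/- For any n×n complex matrix M, (−1)^n · per(M) = ∑_{π ∈ P([n])} (−1)^{↓#π} · ∏_{b ∈ π} det(M[b]), where the sum is over all set partitions of {1,…,n} and (−1)^{↓j} = (−1)(−2)⋯(−j) = (−1)^j · j!. -/
open Finset

/-- Number of cycles of a permutation, counting fixed points as 1-cycles. -/
def numCycles {β : Type*} [Fintype β] [DecidableEq β] (σ : Equiv.Perm β) : ℕ :=
  σ.cycleType.card + (Finset.univ.filter fun i => σ i = i).card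

/-- The α-permanent of a square matrix: ∑_σ α^{#σ} ∏_j M_{j,σ(j)}. -/
noncomputable def aper {β : Type*} [Fintype β] [DecidableEq β]
    (α : ℂ) (M : Matrix β β ℂ) : ℂ :=
  ∑ σ : Equiv.Perm β, α ^ numCycles σ * ∏ j, M j (σ j)

/-- Falling factorial x(x-1)⋯(x-j+1). -/
def fallF (x : ℂ) (j : ℕ) : ℂ := ∏ i ∈ Finset.range j, (x - i)

/-- Rising factorial x(x+1)⋯(x+m-1). -/
def riseF (x : ℂ) (m : ℕ) : ℂ := ∏ i ∈ Finset.range m, (x + i)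

/-- Principal submatrix of `M` indexed by the finset `b`. -/
def subM {n : ℕ} (M : Matrix (Fin n) (Fin n) ℂ) (b : Finset (Fin n)) :
    Matrix b b ℂ :=
  M.submatrix (fun i => (i : Fin n)) (fun j => (j : Fin n))

set_option linter.unusedSectionVars false
set_option linter.unusedVariables false

open Finset Equiv Equiv.Perm
open scoped Matrix

namespace PermDetAux

variable {β : Type*} [Fintype β] [DecidableEq β]



/-- `s` is invariant under `σ`. -/
def InvOn (σ : Perm β) (s : Finset β) : Prop := ∀ a ∈ s, σ a ∈ s

instance (σ : Perm β) (s : Finset β) : Decidable (InvOn σ s) := by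
  unfold InvOn; infer_instance

/-- The orbit of `a` under `σ`, as a finset. -/
def gorb (σ : Perm β) (a : β) : Finset β := univ.filter fun b => σ.SameCycle a b

lemma mem_gorb {σ : Perm β} {a b : β} : b ∈ gorb σ a ↔ σ.SameCycle a b := by
  simp [gorb]

lemma self_mem_gorb (σ : Perm β) (a : β) : a ∈ gorb σ a :=
  mem_gorb.2 (Equiv.Perm.SameCycle.refl _ _)

lemma gorb_eq_of_sameCycle {σ : Perm β} {a b : β} (h : σ.SameCycle a b) :
    gorb σ a = gorb σ b := by
  ext c
  simp only [mem_gorb]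
  exact ⟨fun h' => h.symm.trans h', fun h' => h.trans h'⟩

lemma pow_mem_of_invOn {σ : Perm β} {s : Finset β} (hs : InvOn σ s) (i : ℕ) :
    ∀ a ∈ s, (σ ^ i) a ∈ s := by
  induction i with
  | zero => intro a ha; simpa using ha
  | succ k ih =>
    intro a ha
    rw [pow_succ, Equiv.Perm.mul_apply]
    exact ih _ (hs a ha)

lemma mem_of_invOn {σ : Perm β} {s : Finset β} (hs : InvOn σ s) {a b : β} (ha : a ∈ s)
    (h : σ.SameCycle a b) : b ∈ s := by
  obtain ⟨i, _, rfl⟩ := h.exists_pow_eq'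
  exact pow_mem_of_invOn hs i a ha

lemma invOn_mem_iff {σ : Perm β} {s : Finset β} (hs : InvOn σ s) {a : β} :
    σ a ∈ s ↔ a ∈ s := by
  constructor
  · intro h
    have himg : s.image σ = s := by
      apply Finset.eq_of_subset_of_card_le
      · intro b hb
        obtain ⟨c, hc, rfl⟩ := Finset.mem_image.1 hb
        exact hs c hc
      · rw [Finset.card_image_of_injective _ σ.injective]
    rw [← himg] at h
    obtain ⟨c, hc, hca⟩ := Finset.mem_image.1 h
    rwa [← σ.injective hca]
  · exact hs a

lemma invOn_sdiff {σ : Perm β} {s B : Finset β} (hs : InvOn σ s) (hB : InvOn σ B) :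
    InvOn σ (s \ B) := by
  intro a ha
  rw [Finset.mem_sdiff] at ha ⊢
  exact ⟨hs a ha.1, fun h => ha.2 ((invOn_mem_iff hB).1 h)⟩

lemma invOn_gorb (σ : Perm β) (a : β) : InvOn σ (gorb σ a) := by
  intro b hb
  exact mem_gorb.2 ((mem_gorb.1 hb).trans ⟨1, by simp⟩)

lemma gorb_subset {σ : Perm β} {s : Finset β} (hs : InvOn σ s) {a : β} (ha : a ∈ s) :
    gorb σ a ⊆ s := fun _ hb => mem_of_invOn hs ha (mem_gorb.1 hb)

/-- The set of orbits meeting `s`. -/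
def orbs (σ : Perm β) (s : Finset β) : Finset (Finset β) := s.image (gorb σ)

/-- The number of orbits meeting `s`. -/
def orbCount (σ : Perm β) (s : Finset β) : ℕ := (orbs σ s).card

lemma orbs_sdiff {σ : Perm β} {s B : Finset β} (_hs : InvOn σ s) (hB : InvOn σ B)
    (hBs : B ⊆ s) : orbs σ (s \ B) = orbs σ s \ orbs σ B := by
  ext t
  simp only [orbs, Finset.mem_image, Finset.mem_sdiff]
  constructor
  · rintro ⟨b, hb, rfl⟩
    refine ⟨⟨b, hb.1, rfl⟩, ?_⟩
    have hbB := hb.2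
    rintro ⟨c, hc, hct⟩
    exact hbB (mem_of_invOn hB hc (mem_gorb.1 (hct ▸ self_mem_gorb σ b)))
  · rintro ⟨⟨b, hb, rfl⟩, ht⟩
    exact ⟨b, ⟨hb, fun hbB => ht ⟨b, hbB, rfl⟩⟩, rfl⟩

lemma orbs_mono {σ : Perm β} {s B : Finset β} (h : B ⊆ s) : orbs σ B ⊆ orbs σ s :=
  Finset.image_subset_image h

lemma orbCount_sdiff {σ : Perm β} {s B : Finset β} (hs : InvOn σ s) (hB : InvOn σ B)
    (hBs : B ⊆ s) : orbCount σ (s \ B) = orbCount σ s - orbCount σ B := by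
  rw [orbCount, orbs_sdiff hs hB hBs, Finset.card_sdiff_of_subset (orbs_mono hBs)]
  rfl

lemma sup_orbs {σ : Perm β} {B : Finset β} (hB : InvOn σ B) : (orbs σ B).sup id = B := by
  apply le_antisymm
  · apply Finset.sup_le
    intro t ht
    obtain ⟨b, hb, rfl⟩ := Finset.mem_image.1 ht
    exact gorb_subset hB hb
  · intro b hb
    have h1 : gorb σ b ≤ (orbs σ B).sup id :=
      Finset.le_sup (f := id) (show gorb σ b ∈ orbs σ B from Finset.mem_image_of_mem _ hb)
    exact h1 (self_mem_gorb σ b)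

lemma orbs_union {σ : Perm β} {s : Finset β} {a : β} {T : Finset (Finset β)}
    (_hs : InvOn σ s) (ha : a ∈ s) (hT : T ⊆ (orbs σ s).erase (gorb σ a)) :
    orbs σ (gorb σ a ∪ T.sup id) = insert (gorb σ a) T := by
  ext t
  simp only [orbs, Finset.mem_image, Finset.mem_insert]
  constructor
  · rintro ⟨b, hb, rfl⟩
    rcases Finset.mem_union.1 hb with h | h
    · exact Or.inl (gorb_eq_of_sameCycle (mem_gorb.1 h)).symm
    · obtain ⟨u, huT, hbu⟩ := Finset.mem_sup.1 h
      obtain ⟨c, _hc, rfl⟩ := Finset.mem_image.1 (Finset.mem_of_mem_erase (hT huT))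
      exact Or.inr (by rwa [← gorb_eq_of_sameCycle (mem_gorb.1 hbu)])
  · rintro (rfl | htT)
    · exact ⟨a, Finset.mem_union_left _ (self_mem_gorb σ a), rfl⟩
    · obtain ⟨c, _hc, rfl⟩ := Finset.mem_image.1 (Finset.mem_of_mem_erase (hT htT))
      exact ⟨c, Finset.mem_union_right _ (Finset.mem_sup.2 ⟨_, htT, self_mem_gorb σ c⟩), rfl⟩

lemma invOn_union_orbs {σ : Perm β} {s : Finset β} {a : β} {T : Finset (Finset β)}
    (_hs : InvOn σ s) (hT : T ⊆ (orbs σ s).erase (gorb σ a)) :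
    InvOn σ (gorb σ a ∪ T.sup id) := by
  intro b hb
  rcases Finset.mem_union.1 hb with h | h
  · exact Finset.mem_union_left _ (invOn_gorb σ a b h)
  · obtain ⟨u, huT, hbu⟩ := Finset.mem_sup.1 h
    obtain ⟨c, _hc, rfl⟩ := Finset.mem_image.1 (Finset.mem_of_mem_erase (hT huT))
    exact Finset.mem_union_right _ (Finset.mem_sup.2 ⟨_, huT, invOn_gorb σ c b hbu⟩)


lemma fallF_succ (x : ℂ) (k : ℕ) : fallF x (k + 1) = x * fallF (x - 1) k := by
  rw [fallF, Finset.prod_range_succ', fallF]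
  have h1 : ∀ i ∈ Finset.range k, (x - (↑(i + 1) : ℂ)) = (x - 1) - i := by
    intro i _; push_cast; ring
  rw [Finset.prod_congr rfl h1]
  push_cast
  ring

/-- A finpartition all of whose parts are invariant under `σ`. -/
def PInv (σ : Perm β) {s : Finset β} (π : Finpartition s) : Prop :=
  ∀ b ∈ π.parts, ∀ c ∈ b, σ c ∈ b

instance (σ : Perm β) {s : Finset β} (π : Finpartition s) : Decidable (PInv σ π) := by
  unfold PInv; infer_instance

lemma parts_avoid {s : Finset β} (π : Finpartition s) {B : Finset β} (hB : B ∈ π.parts) :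
    (π.avoid B).parts = π.parts.erase B := by
  ext c
  rw [Finpartition.mem_avoid, Finset.mem_erase]
  constructor
  · rintro ⟨d, hd, hdB, rfl⟩
    have hdB' : d ≠ B := fun h => hdB (h ▸ le_refl _)
    have hdisj : Disjoint d B := π.disjoint hd hB hdB'
    rw [Finset.sdiff_eq_self_of_disjoint hdisj]
    exact ⟨hdB', hd⟩
  · rintro ⟨hcB, hc⟩
    have hdisj : Disjoint c B := π.disjoint hc hB hcB
    refine ⟨c, hc, fun hle => ?_, Finset.sdiff_eq_self_of_disjoint hdisj⟩
    obtain ⟨z, hz⟩ := π.nonempty_of_mem_parts hc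
    exact (Finset.disjoint_left.1 hdisj hz) (hle hz)

lemma sum_fallF_inv (σ : Perm β) :
    ∀ s : Finset β, InvOn σ s → ∀ x : ℂ,
      (∑ π ∈ (Finset.univ : Finset (Finpartition s)).filter (fun π => PInv σ π),
        fallF x π.parts.card) = x ^ orbCount σ s := by
  intro s
  induction s using Finset.strongInduction with
  | _ s ih =>
    intro hs x
    rcases s.eq_empty_or_nonempty with rfl | ⟨a, ha⟩
    · have h0 : orbCount σ (∅ : Finset β) = 0 := by simp [orbCount, orbs]
      rw [h0, pow_zero]
      have hpe : ∀ π : Finpartition (∅ : Finset β), π.parts = ∅ := fun π =>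
        Finpartition.parts_eq_empty_iff.mpr rfl
      have hall : ∀ π : Finpartition (∅ : Finset β), PInv σ π := by
        intro π b hb
        rw [hpe π] at hb
        exact absurd hb (Finset.notMem_empty _)
      rw [Finset.filter_true_of_mem (fun π _ => hall π)]
      have huniq : ∀ π π' : Finpartition (∅ : Finset β), π = π' := fun π π' =>
        Finpartition.ext (by rw [hpe π, hpe π'])
      have hcard : Fintype.card (Finpartition (∅ : Finset β)) = 1 :=
        Fintype.card_eq_one_of_forall_eq (fun π => huniq π ⊥)
      rw [Finset.sum_congr rfl (fun π _ => by rw [hpe π, Finset.card_empty]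
        : ∀ π ∈ (Finset.univ : Finset (Finpartition (∅ : Finset β))), fallF x π.parts.card = fallF x 0)]
      simp [fallF, hcard]
    · -- main case
      set Bs := s.powerset.filter (fun B => a ∈ B ∧ InvOn σ B) with hBsdef
      have hmap : ∀ π ∈ (Finset.univ : Finset (Finpartition s)).filter (fun π => PInv σ π),
          π.part a ∈ Bs := by
        intro π hπ
        rw [Finset.mem_filter] at hπ
        exact Finset.mem_filter.2 ⟨Finset.mem_powerset.2 (π.le (π.part_mem.2 ha)),
          π.mem_part ha, fun c hc => hπ.2 _ (π.part_mem.2 ha) c hc⟩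
      rw [← Finset.sum_fiberwise_of_maps_to hmap]
      have step2 : ∀ B ∈ Bs,
          (∑ π ∈ ((Finset.univ : Finset (Finpartition s)).filter fun π => PInv σ π).filter
            (fun π => π.part a = B), fallF x π.parts.card)
          = x * (x - 1) ^ orbCount σ (s \ B) := by
        intro B hB
        rw [hBsdef, Finset.mem_filter, Finset.mem_powerset] at hB
        obtain ⟨hBs', haB, hBinv⟩ := hB
        have hBne : B ≠ ⊥ := by
          intro h
          rw [h] at haB
          simp at haB
        have hdisj : Disjoint (s \ B) B := Finset.sdiff_disjoint
        have hsup : (s \ B) ⊔ B = s := by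
          rw [sup_eq_union]
          exact Finset.sdiff_union_of_subset hBs'
        have hss : s \ B ⊂ s := Finset.sdiff_ssubset hBs' ⟨a, haB⟩
        have hbij : (∑ π ∈ ((Finset.univ : Finset (Finpartition s)).filter fun π => PInv σ π).filter
              (fun π => π.part a = B), fallF x π.parts.card)
            = ∑ π' ∈ (Finset.univ : Finset (Finpartition (s \ B))).filter (fun π' => PInv σ π'),
                fallF x (π'.parts.card + 1) := by
          refine Finset.sum_bij' (fun π _ => π.avoid B)
            (fun π' _ => π'.extend hBne hdisj hsup) ?_ ?_ ?_ ?_ ?_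
          · intro π hπ
            simp only [Finset.mem_filter, Finset.mem_univ, true_and] at hπ
            obtain ⟨hπinv, hπa⟩ := hπ
            have hBmem : B ∈ π.parts := hπa ▸ π.part_mem.2 ha
            simp only [Finset.mem_filter, Finset.mem_univ, true_and]
            intro b hb
            rw [parts_avoid π hBmem] at hb
            exact hπinv b (Finset.mem_of_mem_erase hb)
          · intro π' hπ'
            simp only [Finset.mem_filter, Finset.mem_univ, true_and] at hπ'
            have hparts : (π'.extend hBne hdisj hsup).parts = insert B π'.parts := rfl
            simp only [Finset.mem_filter, Finset.mem_univ, true_and]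
            constructor
            · intro b hb
              rw [hparts] at hb
              rcases Finset.mem_insert.1 hb with rfl | hb'
              · exact fun c hc => hBinv c hc
              · exact hπ' b hb'
            · exact Finpartition.part_eq_of_mem _ (by rw [hparts]; exact Finset.mem_insert_self _ _) haB
          · intro π hπ
            simp only [Finset.mem_filter, Finset.mem_univ, true_and] at hπ
            have hBmem : B ∈ π.parts := hπ.2 ▸ π.part_mem.2 ha
            apply Finpartition.ext
            show insert B ((π.avoid B).parts) = π.parts
            rw [parts_avoid π hBmem, Finset.insert_erase hBmem]
          · intro π' hπ'
            have hBnotin : B ∉ π'.parts := by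
              intro h
              have := π'.le h
              exact (Finset.mem_sdiff.1 (this haB)).2 haB
            apply Finpartition.ext
            have hBmem : B ∈ (π'.extend hBne hdisj hsup).parts := Finset.mem_insert_self _ _
            rw [parts_avoid _ hBmem]
            show (insert B π'.parts).erase B = π'.parts
            rw [Finset.erase_insert hBnotin]
          · intro π hπ
            simp only [Finset.mem_filter, Finset.mem_univ, true_and] at hπ
            have hBmem : B ∈ π.parts := hπ.2 ▸ π.part_mem.2 ha
            have hpos : 0 < π.parts.card := Finset.card_pos.2 ⟨B, hBmem⟩
            congr 1
            rw [parts_avoid π hBmem, Finset.card_erase_of_mem hBmem]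
            omega
        rw [hbij]
        rw [Finset.sum_congr rfl (fun π' _ => fallF_succ x π'.parts.card), ← Finset.mul_sum,
          ih (s \ B) hss (invOn_sdiff hs hBinv) (x - 1)]
      rw [Finset.sum_congr rfl step2]
      have hgorbmem : gorb σ a ∈ orbs σ s := Finset.mem_image_of_mem _ ha
      set O := (orbs σ s).erase (gorb σ a) with hO
      have horbpos : 0 < orbCount σ s := Finset.card_pos.2 ⟨_, hgorbmem⟩
      have hOcard : O.card + 1 = orbCount σ s := by
        have hoc : orbCount σ s = (orbs σ s).card := rfl
        rw [hO, Finset.card_erase_of_mem hgorbmem]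
        omega
      have hbij2 : (∑ B ∈ Bs, x * (x - 1) ^ orbCount σ (s \ B))
          = ∑ T ∈ O.powerset, x * (x - 1) ^ (O.card - T.card) := by
        refine Finset.sum_bij' (fun B _ => (orbs σ B).erase (gorb σ a))
          (fun T _ => gorb σ a ∪ T.sup id) ?_ ?_ ?_ ?_ ?_
        · intro B hB
          rw [hBsdef, Finset.mem_filter, Finset.mem_powerset] at hB
          exact Finset.mem_powerset.2 (Finset.erase_subset_erase _ (orbs_mono hB.1))
        · intro T hT
          rw [Finset.mem_powerset] at hT
          refine Finset.mem_filter.2 ⟨Finset.mem_powerset.2 ?_,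
            Finset.mem_union_left _ (self_mem_gorb σ a), invOn_union_orbs hs hT⟩
          apply Finset.union_subset (gorb_subset hs ha)
          show T.sup id ≤ s
          apply Finset.sup_le
          intro t ht
          obtain ⟨c, hc, rfl⟩ := Finset.mem_image.1 (Finset.mem_of_mem_erase (hT ht))
          exact gorb_subset hs hc
        · intro B hB
          rw [hBsdef, Finset.mem_filter, Finset.mem_powerset] at hB
          obtain ⟨hBs', haB, hBinv⟩ := hB
          have hga : gorb σ a ∈ orbs σ B := Finset.mem_image_of_mem _ haB
          show gorb σ a ∪ ((orbs σ B).erase (gorb σ a)).sup id = B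
          conv_rhs => rw [← sup_orbs hBinv, ← Finset.insert_erase hga, Finset.sup_insert]
          simp [Finset.sup_eq_union]
        · intro T hT
          rw [Finset.mem_powerset] at hT
          have hnotin : gorb σ a ∉ T := fun h => (Finset.mem_erase.1 (hT h)).1 rfl
          show (orbs σ (gorb σ a ∪ T.sup id)).erase (gorb σ a) = T
          rw [orbs_union hs ha hT, Finset.erase_insert hnotin]
        · intro B hB
          rw [hBsdef, Finset.mem_filter, Finset.mem_powerset] at hB
          obtain ⟨hBs', haB, hBinv⟩ := hB
          have hga : gorb σ a ∈ orbs σ B := Finset.mem_image_of_mem _ haB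
          have h1 : orbCount σ (s \ B) = orbCount σ s - orbCount σ B :=
            orbCount_sdiff hs hBinv hBs'
          have h2 : ((orbs σ B).erase (gorb σ a)).card = orbCount σ B - 1 :=
            Finset.card_erase_of_mem hga
          have h3 : 0 < orbCount σ B := Finset.card_pos.2 ⟨_, hga⟩
          have h4 : orbCount σ B ≤ orbCount σ s := Finset.card_le_card (orbs_mono hBs')
          have hexp : orbCount σ (s \ B) = O.card - ((orbs σ B).erase (gorb σ a)).card := by
            omega
          show x * (x - 1) ^ orbCount σ (s \ B)
            = x * (x - 1) ^ (O.card - ((orbs σ B).erase (gorb σ a)).card)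
          rw [hexp]
      rw [hbij2, ← Finset.mul_sum]
      have hbin : (∑ T ∈ O.powerset, (x - 1) ^ (O.card - T.card)) = x ^ O.card := by
        have hpa := Finset.prod_add (fun _ : Finset β => (1 : ℂ)) (fun _ => x - 1) O
        simp only [Finset.prod_const, one_pow, one_mul] at hpa
        calc (∑ T ∈ O.powerset, (x - 1) ^ (O.card - T.card))
            = ∑ T ∈ O.powerset, (x - 1) ^ (O \ T).card := by
              refine Finset.sum_congr rfl fun T hT => ?_
              rw [Finset.card_sdiff_of_subset (Finset.mem_powerset.1 hT)]
          _ = (1 + (x - 1)) ^ O.card := hpa.symm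
          _ = x ^ O.card := by norm_num
      rw [hbin, ← hOcard, pow_succ, mul_comm]

/-- Splitting a finset along a subset. -/
def sdiffEquiv {α : Type*} [DecidableEq α] (s B : Finset α) (hBs : B ⊆ s) :
    {x // x ∈ s} ≃ {x // x ∈ B} ⊕ {x // x ∈ s \ B} where
  toFun x := if h : ↑x ∈ B then Sum.inl ⟨x.1, h⟩
    else Sum.inr ⟨x.1, Finset.mem_sdiff.2 ⟨x.2, h⟩⟩
  invFun y :=
    match y with
    | Sum.inl b => ⟨b.1, hBs b.2⟩
    | Sum.inr c => ⟨c.1, (Finset.mem_sdiff.1 c.2).1⟩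
  left_inv x := by
    by_cases h : ↑x ∈ B
    · simp only [dif_pos h]
    · simp only [dif_neg h]
  right_inv y := by
    rcases y with b | c
    · simp only [dif_pos b.2]
    · have hc := Finset.mem_sdiff.1 c.2
      simp only [dif_neg hc.2]

lemma sdiffEquiv_apply_mem {α : Type*} [DecidableEq α] {s B : Finset α} (hBs : B ⊆ s)
    (x : {x // x ∈ s}) (h : ↑x ∈ B) : sdiffEquiv s B hBs x = Sum.inl ⟨x.1, h⟩ :=
  dif_pos h

lemma sdiffEquiv_apply_not_mem {α : Type*} [DecidableEq α] {s B : Finset α} (hBs : B ⊆ s)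
    (x : {x // x ∈ s}) (h : ↑x ∉ B) :
    sdiffEquiv s B hBs x = Sum.inr ⟨x.1, Finset.mem_sdiff.2 ⟨x.2, h⟩⟩ :=
  dif_neg h

/-- A partition-masked matrix, as a matrix on the coerced subtype. -/
def maskS {n : ℕ} (M : Matrix (Fin n) (Fin n) ℂ) {s : Finset (Fin n)}
    (π : Finpartition s) : Matrix s s ℂ :=
  Matrix.of fun i j => if (j : Fin n) ∈ π.part (i : Fin n) then M i j else 0

lemma prod_det_subM {n : ℕ} (M : Matrix (Fin n) (Fin n) ℂ) :
    ∀ (s : Finset (Fin n)) (π : Finpartition s),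
      (∏ b ∈ π.parts, (subM M b).det) = (maskS M π).det := by
  intro s
  induction s using Finset.strongInduction with
  | _ s ih =>
    intro π
    rcases s.eq_empty_or_nonempty with rfl | ⟨a, ha⟩
    · have hpe : π.parts = ∅ := Finpartition.parts_eq_empty_iff.mpr rfl
      haveI : IsEmpty ((∅ : Finset (Fin n)) : Type) :=
        ⟨fun x => absurd x.2 (Finset.notMem_empty _)⟩
      rw [hpe, Finset.prod_empty, Matrix.det_isEmpty]
    · set B := π.part a with hBdef
      have hBmem : B ∈ π.parts := π.part_mem.2 ha
      have hBs : B ⊆ s := π.le hBmem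
      have haB : a ∈ B := π.mem_part ha
      have hss : s \ B ⊂ s := Finset.sdiff_ssubset hBs ⟨a, haB⟩
      have hkey : maskS M π =
          (Matrix.fromBlocks (subM M B) 0 0 (maskS M (π.avoid B))).submatrix
            (sdiffEquiv s B hBs) (sdiffEquiv s B hBs) := by
        ext i j
        rcases i with ⟨i, hi⟩
        rcases j with ⟨j, hj⟩
        rw [Matrix.submatrix_apply]
        show (if j ∈ π.part i then M i j else 0) = _
        by_cases hiB : i ∈ B
        · rw [sdiffEquiv_apply_mem hBs ⟨i, hi⟩ hiB]
          have hpi : π.part i = B := π.part_eq_of_mem hBmem hiB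
          by_cases hjB : j ∈ B
          · rw [sdiffEquiv_apply_mem hBs ⟨j, hj⟩ hjB, Matrix.fromBlocks_apply₁₁]
            rw [if_pos (hpi ▸ hjB)]
            rfl
          · rw [sdiffEquiv_apply_not_mem hBs ⟨j, hj⟩ hjB, Matrix.fromBlocks_apply₁₂]
            rw [if_neg (fun h => hjB (hpi ▸ h))]
            rfl
        · rw [sdiffEquiv_apply_not_mem hBs ⟨i, hi⟩ hiB]
          have hpi : π.part i ≠ B := fun h => hiB (h ▸ π.mem_part hi)
          by_cases hjB : j ∈ B
          · rw [sdiffEquiv_apply_mem hBs ⟨j, hj⟩ hjB, Matrix.fromBlocks_apply₂₁]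
            rw [if_neg (fun h => hpi ?_)]
            · rfl
            · rw [← π.part_eq_of_mem (π.part_mem.2 hi) h,
                π.part_eq_of_mem hBmem hjB]
          · rw [sdiffEquiv_apply_not_mem hBs ⟨j, hj⟩ hjB, Matrix.fromBlocks_apply₂₂]
            have hip : i ∈ π.part i := π.mem_part hi
            have hmem' : π.part i ∈ (π.avoid B).parts := by
              rw [parts_avoid π hBmem]
              exact Finset.mem_erase.2 ⟨hpi, π.part_mem.2 hi⟩
            have hpart' : (π.avoid B).part i = π.part i :=
              Finpartition.part_eq_of_mem _ hmem' hip
            show _ = (if j ∈ (π.avoid B).part i then M i j else 0)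
            rw [hpart']
      rw [hkey, Matrix.det_submatrix_equiv_self, Matrix.det_fromBlocks_zero₂₁,
        ← ih (s \ B) hss (π.avoid B), ← Finset.mul_prod_erase _ _ hBmem,
        parts_avoid π hBmem]


lemma gorb_fixed {σ : Perm β} {a : β} (h : σ a = a) : gorb σ a = {a} := by
  have hpow : ∀ i : ℕ, (σ ^ i) a = a := by
    intro i
    induction i with
    | zero => rfl
    | succ k ih => rw [pow_succ, Equiv.Perm.mul_apply, h, ih]
  ext b
  rw [mem_gorb, Finset.mem_singleton]
  constructor
  · intro h'
    obtain ⟨i, _, rfl⟩ := h'.exists_pow_eq'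
    exact (hpow i)
  · rintro rfl
    exact Equiv.Perm.SameCycle.refl _ _

lemma orbs_univ (σ : Perm β) :
    orbs σ (Finset.univ : Finset β)
      = (σ.supportᶜ).image (fun a => ({a} : Finset β))
        ∪ σ.cycleFactorsFinset.image Equiv.Perm.support := by
  have hu : (Finset.univ : Finset β) = σ.supportᶜ ∪ σ.support := by
    ext b
    simp only [Finset.mem_univ, Finset.mem_union, Finset.mem_compl, true_iff]
    exact (em (b ∈ σ.support)).symm
  rw [orbs, hu, Finset.image_union]
  congr 1
  · apply Finset.image_congr
    intro a ha
    rw [Finset.mem_coe, Finset.mem_compl, Equiv.Perm.notMem_support] at ha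
    exact gorb_fixed ha
  · have hg : ∀ a ∈ (σ.support : Finset β), gorb σ a = (σ.cycleOf a).support := by
      intro a ha
      ext b
      rw [mem_gorb, Equiv.Perm.mem_support_cycleOf_iff]
      exact ⟨fun h => ⟨h, ha⟩, fun h => h.1⟩
    rw [Finset.image_congr hg]
    ext c
    simp only [Finset.mem_image]
    constructor
    · rintro ⟨a, ha, rfl⟩
      refine ⟨σ.cycleOf a, Equiv.Perm.cycleOf_mem_cycleFactorsFinset_iff.2 ha, rfl⟩
    · rintro ⟨c', hc', rfl⟩
      have hcyc := (Equiv.Perm.mem_cycleFactorsFinset_iff.1 hc').1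
      have hne : c'.support.Nonempty := by
        rw [Finset.nonempty_iff_ne_empty, Ne, Equiv.Perm.support_eq_empty_iff]
        exact hcyc.ne_one
      obtain ⟨a, hac⟩ := hne
      have hca : c' a = σ a := (Equiv.Perm.mem_cycleFactorsFinset_iff.1 hc').2 a hac
      have ha' : a ∈ σ.support := by
        rw [Equiv.Perm.mem_support, ← hca]
        exact Equiv.Perm.mem_support.1 hac
      refine ⟨a, ha', ?_⟩
      rw [← Equiv.Perm.cycle_is_cycleOf hac hc']

lemma orbCount_univ {n : ℕ} (σ : Perm (Fin n)) :
    orbCount σ (Finset.univ : Finset (Fin n))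
      = (n - σ.support.card) + σ.cycleFactorsFinset.card := by
  rw [orbCount, orbs_univ]
  have hdisj : Disjoint ((σ.supportᶜ).image (fun a => ({a} : Finset (Fin n))))
      (σ.cycleFactorsFinset.image Equiv.Perm.support) := by
    rw [Finset.disjoint_left]
    rintro t ht ht'
    obtain ⟨a, ha, rfl⟩ := Finset.mem_image.1 ht
    obtain ⟨c, hc, hct⟩ := Finset.mem_image.1 ht'
    have hac : a ∈ c.support := hct ▸ Finset.mem_singleton_self a
    have hca : c a = σ a := (Equiv.Perm.mem_cycleFactorsFinset_iff.1 hc).2 a hac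
    rw [Finset.mem_compl, Equiv.Perm.notMem_support] at ha
    rw [Equiv.Perm.mem_support, hca, ha] at hac
    exact hac rfl
  rw [Finset.card_union_of_disjoint hdisj]
  congr 1
  · rw [Finset.card_image_of_injective _ Finset.singleton_injective, Finset.card_compl,
      Fintype.card_fin]
  · apply Finset.card_image_of_injOn
    intro c1 h1 c2 h2 hs
    by_contra hne
    have hd := (Equiv.Perm.cycleFactorsFinset_pairwise_disjoint σ) h1 h2 hne
    have hds := Equiv.Perm.Disjoint.disjoint_support hd
    rw [hs] at hds
    have hcyc := (Equiv.Perm.mem_cycleFactorsFinset_iff.1 h2).1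
    have hne2 : c2.support.Nonempty := by
      rw [Finset.nonempty_iff_ne_empty, Ne, Equiv.Perm.support_eq_empty_iff]
      exact hcyc.ne_one
    exact hne2.ne_empty (disjoint_self.1 hds)

lemma sign_orb {n : ℕ} (σ : Perm (Fin n)) :
    (((Equiv.Perm.sign σ : ℤˣ) : ℤ) : ℂ) * (-1) ^ orbCount σ (Finset.univ : Finset (Fin n))
      = (-1) ^ n := by
  have hsign := Equiv.Perm.sign_of_cycleType σ
  have hsum := Equiv.Perm.sum_cycleType σ
  have hcard : Multiset.card σ.cycleType = σ.cycleFactorsFinset.card := by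
    rw [Equiv.Perm.cycleType_def, Multiset.card_map]
    rfl
  have hcast : (((Equiv.Perm.sign σ : ℤˣ) : ℤ) : ℂ)
      = (-1) ^ (σ.support.card + σ.cycleFactorsFinset.card) := by
    rw [hsign, hsum, hcard]
    push_cast
    norm_num
  have hle : σ.support.card ≤ n := by
    have := Finset.card_le_univ σ.support
    simpa using this
  rw [hcast, orbCount_univ, ← pow_add,
    show σ.support.card + σ.cycleFactorsFinset.card
        + ((n - σ.support.card) + σ.cycleFactorsFinset.card)
      = n + 2 * σ.cycleFactorsFinset.card from by omega,
    pow_add, pow_mul, neg_one_sq, one_pow, mul_one]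

/-- The masked matrix on `Fin n`: zero outside the blocks of `π`. -/
def maskM {n : ℕ} (M : Matrix (Fin n) (Fin n) ℂ)
    (π : Finpartition (Finset.univ : Finset (Fin n))) : Matrix (Fin n) (Fin n) ℂ :=
  Matrix.of fun i j => if j ∈ π.part i then M i j else 0

lemma prod_det_subM_univ {n : ℕ} (M : Matrix (Fin n) (Fin n) ℂ)
    (π : Finpartition (Finset.univ : Finset (Fin n))) :
    (∏ b ∈ π.parts, (subM M b).det) = (maskM M π).det := by
  rw [prod_det_subM M Finset.univ π]
  have he : maskS M π = (maskM M π).submatrix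
      (Equiv.subtypeUnivEquiv (fun x => Finset.mem_univ x))
      (Equiv.subtypeUnivEquiv (fun x => Finset.mem_univ x)) := rfl
  rw [he, Matrix.det_submatrix_equiv_self]

lemma det_maskM {n : ℕ} (M : Matrix (Fin n) (Fin n) ℂ)
    (π : Finpartition (Finset.univ : Finset (Fin n))) :
    (maskM M π).det = ∑ σ : Perm (Fin n), (((Equiv.Perm.sign σ : ℤˣ) : ℤ) : ℂ) *
      (if PInv σ π then ∏ i, M i (σ i) else 0) := by
  rw [← Matrix.det_transpose, Matrix.det_apply]
  refine Finset.sum_congr rfl fun σ _ => ?_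
  have h1 : (∏ i, (maskM M π)ᵀ (σ i) i)
      = ∏ i, (if σ i ∈ π.part i then M i (σ i) else 0) := rfl
  have h2 : (∏ i, (if σ i ∈ π.part i then M i (σ i) else 0))
      = if PInv σ π then ∏ i, M i (σ i) else 0 := by
    by_cases h : PInv σ π
    · rw [if_pos h]
      refine Finset.prod_congr rfl fun i _ => if_pos ?_
      exact h _ (π.part_mem.2 (Finset.mem_univ i)) i (π.mem_part (Finset.mem_univ i))
    · rw [if_neg h]
      have hex : ¬ ∀ i, σ i ∈ π.part i := by
        intro hall
        refine h fun b hb c hc => ?_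
        have := π.part_eq_of_mem hb hc
        rw [← this]
        exact hall c
      push_neg at hex
      obtain ⟨i, hi⟩ := hex
      exact Finset.prod_eq_zero (Finset.mem_univ i) (if_neg hi)
  rw [h1, h2]
  simp only [Units.smul_def, zsmul_eq_mul]

end PermDetAux

open PermDetAux in
theorem perm_as_det_combination (n : ℕ) (M : Matrix (Fin n) (Fin n) ℂ) :
    (-1 : ℂ) ^ n * aper 1 M =
      ∑ π : Finpartition (Finset.univ : Finset (Fin n)),
        fallF (-1) π.parts.card * ∏ b ∈ π.parts, (subM M b).det := by
  classical
  have h1 : (∑ π : Finpartition (Finset.univ : Finset (Fin n)),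
        fallF (-1) π.parts.card * ∏ b ∈ π.parts, (subM M b).det)
      = ∑ σ : Equiv.Perm (Fin n), (-1 : ℂ) ^ n * ∏ i, M i (σ i) := by
    calc (∑ π : Finpartition (Finset.univ : Finset (Fin n)),
          fallF (-1) π.parts.card * ∏ b ∈ π.parts, (subM M b).det)
        = ∑ π : Finpartition (Finset.univ : Finset (Fin n)),
            ∑ σ : Equiv.Perm (Fin n), (((Equiv.Perm.sign σ : ℤˣ) : ℤ) : ℂ) *
              (if PInv σ π then fallF (-1) π.parts.card * ∏ i, M i (σ i) else 0) := by
          refine Finset.sum_congr rfl fun π _ => ?_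
          rw [prod_det_subM_univ, det_maskM, Finset.mul_sum]
          refine Finset.sum_congr rfl fun σ _ => ?_
          by_cases h : PInv σ π
          · rw [if_pos h, if_pos h]
            ring
          · rw [if_neg h, if_neg h]
            ring
      _ = ∑ σ : Equiv.Perm (Fin n), ∑ π : Finpartition (Finset.univ : Finset (Fin n)),
            (((Equiv.Perm.sign σ : ℤˣ) : ℤ) : ℂ) *
              (if PInv σ π then fallF (-1) π.parts.card * ∏ i, M i (σ i) else 0) :=
          Finset.sum_comm
      _ = ∑ σ : Equiv.Perm (Fin n), (-1 : ℂ) ^ n * ∏ i, M i (σ i) := by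
          refine Finset.sum_congr rfl fun σ _ => ?_
          rw [← Finset.mul_sum]
          have h3 : (∑ π : Finpartition (Finset.univ : Finset (Fin n)),
                if PInv σ π then fallF (-1) π.parts.card * ∏ i, M i (σ i) else 0)
              = (∑ π ∈ (Finset.univ : Finset (Finpartition (Finset.univ : Finset (Fin n)))).filter
                    (fun π => PInv σ π), fallF (-1) π.parts.card) * ∏ i, M i (σ i) := by
            rw [Finset.sum_mul, Finset.sum_filter]
          rw [h3, sum_fallF_inv σ Finset.univ (fun a _ => Finset.mem_univ (σ a)) (-1),
            ← mul_assoc, sign_orb σ]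
  rw [h1, ← Finset.mul_sum]
  congr 1
  simp [aper]
end

section
/- For any α ∈ ℂ and any n×n complex matrices A and B, per_α(AB) = ∑_{x ∈ [n]^n} per_α(B_x) · ∏_{j=1}^n A_{j,x_j}, where B_x is the n×n matrix whose j-th row is the x_j-th row of B. -/
open Finset

theorem aper_mul (n : ℕ) (α : ℂ) (A B : Matrix (Fin n) (Fin n) ℂ) :
    aper α (A * B) =
      ∑ x : Fin n → Fin n,
        aper α (Matrix.of fun i j => B (x i) j) * ∏ j, A j (x j) := by
  unfold aper
  simp only [Matrix.mul_apply, Matrix.of_apply]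
  have key : ∀ σ : Equiv.Perm (Fin n),
      (∏ j, ∑ k, A j k * B k (σ j)) =
        ∑ x ∈ Fintype.piFinset (fun _ : Fin n => (univ : Finset (Fin n))),
          ∏ j, A j (x j) * B (x j) (σ j) := fun σ => Finset.prod_univ_sum _ _
  simp only [key, Fintype.piFinset_univ, Finset.mul_sum]
  rw [Finset.sum_comm]
  refine Finset.sum_congr rfl fun x _ => ?_
  rw [Finset.sum_mul]
  refine Finset.sum_congr rfl fun σ _ => ?_
  rw [Finset.prod_mul_distrib]
  ring
end

section
/- For any α ∈ ℂ and any n×n complex matrix A, per_α(A + I_n) = ∑_{b ⊆ [n]} α^{n − |b|} per_α(A[b]), where A[b] is the principal submatrix of A indexed by b (and per_α of the empty matrix equals 1). -/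
open Finset

open Equiv Equiv.Perm in
lemma numCycles_ofSubtype {n : ℕ} (b : Finset (Fin n)) (τ : Perm {x // x ∈ b}) :
    numCycles (ofSubtype τ) = numCycles τ + (n - b.card) := by
  classical
  unfold numCycles
  have hc : Multiset.card (ofSubtype τ).cycleType = Multiset.card τ.cycleType := by
    rw [Equiv.Perm.cycleType_ofSubtype]
  have hsplit : (Finset.univ.filter fun i : Fin n => ofSubtype τ i = i)
      = (b.filter fun i => ofSubtype τ i = i) ∪ (bᶜ.filter fun i => ofSubtype τ i = i) := by
    rw [← Finset.filter_union, Finset.union_compl]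
  have hcompl : (bᶜ.filter fun i => ofSubtype τ i = i) = bᶜ := by
    apply Finset.filter_true_of_mem
    intro i hi
    exact ofSubtype_apply_of_not_mem τ (Finset.mem_compl.mp hi)
  have hdisj : Disjoint (b.filter fun i => ofSubtype τ i = i)
      (bᶜ.filter fun i => ofSubtype τ i = i) :=
    Disjoint.mono (Finset.filter_subset _ _) (Finset.filter_subset _ _)
      disjoint_compl_right
  have hb : (Finset.univ.filter fun i : {x // x ∈ b} => τ i = i).card
      = (b.filter fun i => ofSubtype τ i = i).card := by
    refine Finset.card_bij (fun (i : {x // x ∈ b}) _ => (i : Fin n)) ?_ ?_ ?_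
    · intro i hi
      simp only [Finset.mem_filter, Finset.mem_univ, true_and] at hi
      refine Finset.mem_filter.mpr ⟨i.2, ?_⟩
      rw [ofSubtype_apply_of_mem τ i.2, hi]
    · intro i _ j _ h
      exact Subtype.ext h
    · intro x hx
      rw [Finset.mem_filter] at hx
      refine ⟨⟨x, hx.1⟩, Finset.mem_filter.mpr ⟨Finset.mem_univ _, ?_⟩, rfl⟩
      apply Subtype.ext
      rw [← ofSubtype_apply_of_mem τ hx.1]
      exact hx.2
  rw [hc, hsplit, Finset.card_union_of_disjoint hdisj, hcompl, Finset.card_compl, ← hb]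
  simp only [Fintype.card_fin]
  omega

open Equiv Equiv.Perm in
lemma value_eq {n : ℕ} (α : ℂ) (A : Matrix (Fin n) (Fin n) ℂ) (b : Finset (Fin n))
    (τ : Perm {x // x ∈ b}) :
    α ^ numCycles (ofSubtype τ) * ∏ j ∈ b, A j (ofSubtype τ j)
      = α ^ (n - b.card) * (α ^ numCycles τ * ∏ j, subM A b j (τ j)) := by
  rw [numCycles_ofSubtype, pow_add, mul_comm (α ^ numCycles τ), mul_assoc]
  congr 2
  rw [Finset.univ_eq_attach, ← Finset.prod_attach b (fun j => A j (ofSubtype τ j))]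
  apply Finset.prod_congr rfl
  intro j _
  simp [subM, Matrix.submatrix_apply, ofSubtype_apply_of_mem τ j.2]

open Equiv Equiv.Perm in
lemma key_sum {n : ℕ} (α : ℂ) (A : Matrix (Fin n) (Fin n) ℂ) (b : Finset (Fin n)) :
    ∑ σ ∈ Finset.univ.filter (fun σ : Perm (Fin n) => ∀ j ∈ bᶜ, j = σ j),
      α ^ numCycles σ * ∏ j ∈ b, A j (σ j)
    = α ^ (n - b.card) * aper α (subM A b) := by
  classical
  rw [aper, Finset.mul_sum]
  have hmemiff : ∀ σ : Perm (Fin n), (∀ j ∈ bᶜ, j = σ j) → ∀ x, x ∈ b ↔ σ x ∈ b := by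
    intro σ hσ x
    constructor
    · intro hx
      by_contra hn
      have h0 := hσ (σ x) (Finset.mem_compl.mpr hn)
      have h1 : x = σ x := σ.injective h0
      exact hn (by rw [← h1]; exact hx)
    · intro hx
      by_contra hn
      have h0 := hσ x (Finset.mem_compl.mpr hn)
      exact hn (by rw [h0]; exact hx)
  refine Finset.sum_bij' (fun σ hσ => σ.subtypePerm (p := fun x => x ∈ b)
      (fun x => (hmemiff σ (by simpa using (Finset.mem_filter.mp hσ).2) x).symm))
    (fun τ _ => ofSubtype τ) ?_ ?_ ?_ ?_ ?_
  · intro σ hσ; exact Finset.mem_univ _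
  · intro τ _
    refine Finset.mem_filter.mpr ⟨Finset.mem_univ _, ?_⟩
    intro j hj
    exact (ofSubtype_apply_of_not_mem τ (Finset.mem_compl.mp hj)).symm
  · intro σ hσ
    apply ofSubtype_subtypePerm
    intro x hx
    by_contra hn
    exact hx (((Finset.mem_filter.mp hσ).2 x (by simpa using hn)).symm)
  · intro τ _
    exact subtypePerm_ofSubtype τ
  · intro σ hσ
    have h2 := (Finset.mem_filter.mp hσ).2
    have hof : ofSubtype (σ.subtypePerm (p := fun x => x ∈ b)
        (fun x => (hmemiff σ (by simpa using h2) x).symm)) = σ := by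
      apply ofSubtype_subtypePerm
      intro x hx
      by_contra hn
      exact hx ((h2 x (by simpa using hn)).symm)
    conv_lhs => rw [← hof]
    exact value_eq α A b _

theorem aper_add_one (n : ℕ) (α : ℂ) (A : Matrix (Fin n) (Fin n) ℂ) :
    aper α (A + 1) =
      ∑ b : Finset (Fin n), α ^ (n - b.card) * aper α (subM A b) := by
  classical
  rw [aper]
  have expand : ∀ σ : Equiv.Perm (Fin n),
      (∏ j, (A + 1) j (σ j)) =
      ∑ b : Finset (Fin n), (∏ j ∈ b, A j (σ j)) *
        ∏ j ∈ bᶜ, (if j = σ j then (1:ℂ) else 0) := by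
    intro σ
    have : ∀ j, (A + 1) j (σ j) = A j (σ j) + (if j = σ j then 1 else 0) := by
      intro j; simp [Matrix.add_apply, Matrix.one_apply]
    simp_rw [this]
    rw [Finset.prod_add]
    rw [Finset.powerset_univ]
    apply Finset.sum_congr rfl
    intro b _
    rw [← Finset.compl_eq_univ_sdiff]
  simp_rw [expand, Finset.mul_sum]
  rw [Finset.sum_comm]
  apply Finset.sum_congr rfl
  intro b _
  rw [← key_sum α A b, Finset.sum_filter]
  apply Finset.sum_congr rfl
  intro σ _
  rw [Finset.prod_boole]
  by_cases h : ∀ j ∈ bᶜ, j = σ j <;> simp [h, mul_assoc]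
end

section
/- Let π be a set partition of [n] and let Π be the n×n 0-1 matrix with Π_{ij} = 1 iff i and j lie in the same block of π. Then for any α ∈ ℂ, per_α(Π) = ∏_{b ∈ π} α^{↑|b|}, where α^{↑m} := α(α+1)⋯(α+m−1) is the rising factorial. -/
open Finset

open Equiv Equiv.Perm


section lemmas
variable {β : Type*} [Fintype β] [DecidableEq β]

lemma numCycles_eq (σ : Perm β) :
    numCycles σ = σ.cycleType.card + (Fintype.card β - σ.support.card) := by
  unfold numCycles
  congr 1
  have h := Finset.card_filter_add_card_filter_not
    (s := (univ : Finset β)) (p := fun i => σ i = i)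
  have hs : σ.support = univ.filter (fun x => ¬ σ x = x) := by
    ext x; simp [Equiv.Perm.mem_support]
  rw [← Finset.card_univ]
  rw [hs] at *
  omega

lemma numCycles_mul_of_disjoint {d e : Perm β} (h : Disjoint d e) :
    numCycles (d * e) + Fintype.card β = numCycles d + numCycles e := by
  have hsupp := h.disjoint_support
  rw [numCycles_eq, numCycles_eq, numCycles_eq, h.cycleType_mul, Multiset.card_add,
    h.support_mul, Finset.card_union_of_disjoint hsupp]
  have h1 := Finset.card_le_univ d.support
  have h2 := Finset.card_le_univ e.support
  have h3 : (d.support ∪ e.support).card ≤ Fintype.card β := Finset.card_le_univ _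
  rw [Finset.card_union_of_disjoint hsupp] at h3
  omega

end lemmas

section key
variable {β : Type*} [Fintype β] [DecidableEq β]

lemma numCycles_swap_mul (f : Perm β) (x : β) (hx : f x ≠ x) :
    numCycles (Equiv.swap x (f x) * f) = numCycles f + 1 := by
  classical
  set c := f.cycleOf x with hc_def
  have hcx : c x = f x := f.cycleOf_apply_self x
  have hc : c ∈ f.cycleFactorsFinset :=
    cycleOf_mem_cycleFactorsFinset_iff.mpr (mem_support.2 hx)
  have hcyc : IsCycle c := isCycle_cycleOf f hx
  set d := f * c⁻¹ with hd_def
  have hcfx : c (f x) = f (f x) := f.cycleOf_apply_apply_self x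
  have hdc : Disjoint d c := disjoint_mul_inv_of_mem_cycleFactorsFinset hc
  have hf_eq : d * c = f := by rw [hd_def]; group
  clear_value c d
  clear hc_def hd_def hc
  -- d fixes x and f x
  have hdx : d x = x := by
    rcases hdc x with h | h
    · exact h
    · rw [hcx] at h; exact absurd h hx
  have hdfx : d (f x) = f x := by
    rcases hdc (f x) with h | h
    · exact h
    · rw [hcfx] at h
      exact absurd (f.injective h) hx
  have hds : Disjoint d (Equiv.swap x (f x)) := by
    intro y
    by_cases h1 : y = x
    · left; rw [h1, hdx]
    by_cases h2 : y = f x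
    · left; rw [h2, hdfx]
    · right; exact swap_apply_of_ne_of_ne h1 h2
  set s := Equiv.swap x (f x) * c with hs_def
  have hd_s : Disjoint d s := by
    intro y
    rcases hdc y with h | h
    · left; exact h
    · right
      have hy1 : y ≠ x := by rintro rfl; rw [hcx] at h; exact hx h
      have hy2 : y ≠ f x := by
        rintro rfl; rw [hcfx] at h; exact hx (f.injective h)
      rw [hs_def, mul_apply, h, swap_apply_of_ne_of_ne hy1 hy2]
  have key : Equiv.swap x (f x) * f = d * s := by
    have h2 : Equiv.swap x (f x) * (d * c) = d * s := by
      rw [hs_def, ← mul_assoc, ← mul_assoc, hds.commute.eq]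
    rw [← h2, hf_eq]
  have e1 := numCycles_mul_of_disjoint hd_s
  have e2 := numCycles_mul_of_disjoint hdc
  rw [hf_eq] at e2
  rw [key]
  -- suffices : numCycles s = numCycles c + 1
  have hsupc : x ∈ c.support := by rw [mem_support, hcx]; exact hx
  have hsc1 : 1 ≤ c.support.card := Finset.card_pos.mpr ⟨x, hsupc⟩
  have hsc2 : c.support.card ≤ Fintype.card β := Finset.card_le_univ _
  have hmain : numCycles s = numCycles c + 1 := by
    by_cases h1 : f (f x) = x
    · -- c is the swap, s = 1
      have hcswap : c = Equiv.swap x (c x) :=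
        hcyc.eq_swap_of_apply_apply_eq_self (by rw [hcx]; exact hx)
          (by rw [hcx, hcfx]; exact h1)
      have hs1 : s = 1 := by
        rw [hs_def, hcswap, hcx]
        exact Equiv.swap_mul_self _ _
      have hcct : c.cycleType = {c.support.card} := hcyc.cycleType
      have hcsup : c.support.card = 2 := by
        rw [hcswap, hcx, Equiv.Perm.card_support_swap (Ne.symm hx)]
      rw [hs1, numCycles_eq, numCycles_eq, hcct]
      simp only [cycleType_one, Multiset.card_zero, support_one, Finset.card_empty,
        Multiset.card_singleton]
      omega
    · have hccx : c (c x) ≠ x := by rw [hcx, hcfx]; exact h1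
      have hscyc : IsCycle s := by
        have := hcyc.swap_mul (by rw [hcx]; exact hx) hccx
        rwa [hcx] at this
      have hssup : s.support = c.support \ {x} := by
        have h2 := support_swap_mul_eq c x hccx
        rw [hcx] at h2
        exact h2
      have hscard : s.support.card = c.support.card - 1 := by
        rw [hssup, Finset.card_sdiff_of_subset (by simpa using hsupc)]
        simp
      rw [numCycles_eq, numCycles_eq, hscyc.cycleType, hcyc.cycleType, hscard]
      simp only [Multiset.coe_card, List.length_singleton, Multiset.card_singleton]
      omega
  omega

end key

section lemmas
variable {β : Type*} [Fintype β] [DecidableEq β]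

lemma numCycles_extendDomain {γ : Type*} [Fintype γ] [DecidableEq γ] {p : γ → Prop}
    [DecidablePred p] (f : β ≃ Subtype p) (g : Perm β) :
    numCycles (g.extendDomain f) = numCycles g + (Fintype.card γ - Fintype.card β) := by
  rw [numCycles_eq, numCycles_eq, cycleType_extendDomain, card_support_extend_domain]
  have h1 : Fintype.card β ≤ Fintype.card γ := Fintype.card_le_of_embedding
    (f.toEmbedding.trans (Function.Embedding.subtype p))
  have h2 := Finset.card_le_univ g.support
  omega

lemma numCycles_optionCongr {γ : Type*} [Fintype γ] [DecidableEq γ] (e : Perm γ) :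
    numCycles e.optionCongr = numCycles e + 1 := by
  have hext : e.optionCongr = e.extendDomain (optionIsSomeEquiv γ).symm := by
    ext y
    cases y with
    | none => rw [Perm.extendDomain_apply_not_subtype _ _ (by simp)]; rfl
    | some a =>
        rw [Perm.extendDomain_apply_subtype _ _ (by simp)]
        simp [optionIsSomeEquiv]
  rw [hext, numCycles_extendDomain]
  congr 1
  simp [Fintype.card_option]

lemma numCycles_permCongr {γ : Type*} [Fintype γ] [DecidableEq γ] (e : β ≃ γ) (σ : Perm β) :
    numCycles (e.permCongr σ) = numCycles σ := by
  have hext : e.permCongr σ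
      = σ.extendDomain (e.trans (Equiv.subtypeUnivEquiv (fun _ : γ => trivial)).symm) := by
    ext y
    rw [Perm.extendDomain_apply_subtype _ _ trivial]
    simp [Equiv.subtypeUnivEquiv]
  rw [hext, numCycles_extendDomain, Fintype.card_congr e]
  omega

lemma numCycles_decomposeOption {γ : Type*} [Fintype γ] [DecidableEq γ]
    (i : Option γ) (e : Perm γ) :
    numCycles (Equiv.Perm.decomposeOption.symm (i, e))
      = numCycles e + (if i = none then 1 else 0) := by
  set σ : Perm (Option γ) := Equiv.Perm.decomposeOption.symm (i, e) with hσ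
  have h1 : σ none = i ∧ removeNone σ = e := by
    have := Equiv.Perm.decomposeOption.apply_symm_apply (i, e)
    rw [← hσ] at this
    exact ⟨congrArg Prod.fst this, congrArg Prod.snd this⟩
  have hmap : e.optionCongr = Equiv.swap none (σ none) * σ := by
    rw [← h1.2]; exact map_equiv_removeNone σ
  by_cases hi : i = none
  · subst hi
    rw [h1.1, Equiv.swap_self] at hmap
    have : e.optionCongr = σ := by rw [hmap]; ext y; rfl
    rw [← this, numCycles_optionCongr]
    simp
  · have hne : σ none ≠ none := by rw [h1.1]; exact hi
    have := numCycles_swap_mul σ none hne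
    rw [← hmap, numCycles_optionCongr] at this
    simp only [hi, if_false]
    omega

lemma sum_pow_numCycles (α : ℂ) :
    ∀ (m : ℕ) (β : Type) [Fintype β] [DecidableEq β], Fintype.card β = m →
      ∑ σ : Perm β, α ^ numCycles σ = riseF α m := by
  intro m
  induction m with
  | zero =>
      intro β _ _ hβ
      have : IsEmpty β := Fintype.card_eq_zero_iff.mp hβ
      have hone : ∀ σ : Perm β, σ = 1 := fun σ => Subsingleton.elim σ 1
      rw [show (univ : Finset (Perm β)) = {1} by
        ext σ; simp [hone σ]]
      rw [Finset.sum_singleton]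
      have : numCycles (1 : Perm β) = 0 := by
        rw [numCycles_eq]
        simp [hβ]
      rw [this, pow_zero, riseF, Finset.range_zero, Finset.prod_empty]
  | succ m ih =>
      intro β _ _ hβ
      classical
      have e : β ≃ Option (Fin m) :=
        (Fintype.equivFinOfCardEq hβ).trans (finSuccEquiv m)
      rw [Fintype.sum_equiv (Equiv.permCongr e)
        (fun σ => α ^ numCycles σ) (fun σ' => α ^ numCycles σ')
        (fun σ => by simp only [numCycles_permCongr])]
      rw [← Fintype.sum_equiv (Equiv.Perm.decomposeOption (α := Fin m)).symm
        (fun pr : Option (Fin m) × Perm (Fin m) =>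
          α ^ numCycles (Equiv.Perm.decomposeOption.symm pr))
        (fun σ' => α ^ numCycles σ') (fun pr => rfl)]
      have : ∀ pr : Option (Fin m) × Perm (Fin m),
          α ^ numCycles (Equiv.Perm.decomposeOption.symm pr)
            = (if pr.1 = none then α else 1) * α ^ numCycles pr.2 := by
        rintro ⟨i, e'⟩
        rw [numCycles_decomposeOption]
        by_cases hi : i = none
        · subst hi
          rw [if_pos rfl, if_pos rfl, pow_succ, mul_comm]
        · rw [if_neg hi, if_neg hi, add_zero, one_mul]
      rw [Fintype.sum_congr _ _ this, Fintype.sum_prod_type]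
      have hmsum := ih (Fin m) (by simp)
      have hsum : (∑ i : Option (Fin m), (if i = none then α else 1)) = α + m := by
        rw [Fintype.sum_option]
        simp
      calc (∑ i : Option (Fin m), ∑ e' : Perm (Fin m),
              (if i = none then α else 1) * α ^ numCycles e')
          = (∑ i : Option (Fin m), (if i = none then α else 1))
              * (∑ e' : Perm (Fin m), α ^ numCycles e') := by
            rw [Finset.sum_mul]
            exact Finset.sum_congr rfl fun i _ => (Finset.mul_sum _ _ _).symm
        _ = riseF α (m + 1) := by
            rw [hsum, hmsum]
            simp only [riseF]
            rw [Finset.prod_range_succ]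
            push_cast
            ring
end lemmas

lemma cycleType_inst {α : Type*} [DecidableEq α] (i1 i2 : Fintype α) (σ : Perm α) :
    @cycleType α i1 _ σ = @cycleType α i2 _ σ := by
  have h : i1 = i2 := Subsingleton.elim _ _
  subst h; rfl

lemma support_inst {α : Type*} [DecidableEq α] (i1 i2 : Fintype α) (σ : Perm α) :
    @support α _ i1 σ = @support α _ i2 σ := by
  have h : i1 = i2 := Subsingleton.elim _ _
  subst h; rfl

section glue
variable {n : ℕ} (π : Finpartition (Finset.univ : Finset (Fin n)))

abbrev PartPerm := ∀ b : {s // s ∈ π.parts}, Perm {x : Fin n // x ∈ (b : Finset (Fin n))}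

lemma glue_pairwise_disjoint (τ : PartPerm π) :
    Set.Pairwise ↑(univ : Finset {s // s ∈ π.parts})
      (fun b b' => Disjoint (ofSubtype (τ b)) (ofSubtype (τ b'))) := by
  intro b _ b' _ hne x
  have hd : _root_.Disjoint (b : Finset (Fin n)) (b' : Finset (Fin n)) :=
    π.disjoint b.2 b'.2 (fun h => hne (Subtype.ext h))
  by_cases hx : x ∈ (b : Finset (Fin n))
  · right; exact ofSubtype_apply_of_not_mem _ (Finset.disjoint_left.mp hd hx)
  · left; exact ofSubtype_apply_of_not_mem _ hx

def glue (τ : PartPerm π) : Perm (Fin n) :=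
  Finset.univ.noncommProd (fun b => ofSubtype (τ b))
    ((glue_pairwise_disjoint π τ).imp (fun _ _ => Perm.Disjoint.commute))

lemma noncommProd_eval (τ : PartPerm π) (s : Finset {s // s ∈ π.parts}) (x : Fin n) :
    (s.noncommProd (fun b => ofSubtype (τ b))
      (((glue_pairwise_disjoint π τ).mono
        (fun y _ => Finset.mem_coe.mpr (Finset.mem_univ y))).imp
        (fun _ _ => Perm.Disjoint.commute))) x =
      if (⟨π.part x, π.part_mem.2 (mem_univ x)⟩ : {s // s ∈ π.parts}) ∈ s
      then ofSubtype (τ ⟨π.part x, π.part_mem.2 (mem_univ x)⟩) x else x := by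
  classical
  set B : {s // s ∈ π.parts} := ⟨π.part x, π.part_mem.2 (mem_univ x)⟩ with hB
  have hxB : x ∈ (B : Finset (Fin n)) := π.mem_part (mem_univ x)
  induction s using Finset.induction_on with
  | empty => simp
  | @insert b s hb ihs =>
    rw [Finset.noncommProd_insert_of_notMem _ _ _ _ hb, mul_apply, ihs]
    by_cases hBs : B ∈ s
    · rw [if_pos hBs, if_pos (Finset.mem_insert_of_mem hBs)]
      have hne : B ≠ b := fun h => hb (h ▸ hBs)
      have hy : ofSubtype (τ B) x ∈ (B : Finset (Fin n)) :=
        (ofSubtype_apply_mem_iff_mem (τ B) x).mpr hxB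
      have hd : _root_.Disjoint (B : Finset (Fin n)) (b : Finset (Fin n)) :=
        π.disjoint B.2 b.2 (fun h => hne (Subtype.ext h))
      exact ofSubtype_apply_of_not_mem _ (Finset.disjoint_left.mp hd hy)
    · rw [if_neg hBs]
      by_cases hBb : B = b
      · subst hBb
        rw [if_pos (Finset.mem_insert_self _ _)]
      · rw [if_neg (by simp [hBb, hBs])]
        have hd : _root_.Disjoint (B : Finset (Fin n)) (b : Finset (Fin n)) :=
          π.disjoint B.2 b.2 (fun h => hBb (Subtype.ext h))
        exact ofSubtype_apply_of_not_mem _ (Finset.disjoint_left.mp hd hxB)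

lemma glue_apply (τ : PartPerm π) {b : Finset (Fin n)} (hb : b ∈ π.parts) {x : Fin n}
    (hx : x ∈ b) : glue π τ x = ↑(τ ⟨b, hb⟩ ⟨x, hx⟩) := by
  have he : π.part x = b := π.part_eq_of_mem hb hx
  subst he
  rw [glue, noncommProd_eval, if_pos (Finset.mem_univ _)]
  exact ofSubtype_apply_of_mem _ hx

lemma numCycles_glue (τ : PartPerm π) :
    numCycles (glue π τ) = ∑ b : {s // s ∈ π.parts}, numCycles (τ b) := by
  classical
  have hct : (glue π τ).cycleType = ∑ b : {s // s ∈ π.parts}, (τ b).cycleType := by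
    rw [glue, Disjoint.cycleType_noncommProd (glue_pairwise_disjoint π τ)]
    exact Finset.sum_congr rfl fun b _ =>
      cycleType_ofSubtype.trans (cycleType_inst _ _ _)
  have hsupcard : (glue π τ).support.card
      = ∑ b : {s // s ∈ π.parts}, (τ b).support.card := by
    rw [glue, support_noncommProd (glue_pairwise_disjoint π τ),
      Finset.card_biUnion (fun b _ b' _ hne =>
        disjoint_iff_disjoint_support.mp
          (glue_pairwise_disjoint π τ (by simp) (by simp) hne))]
    refine Finset.sum_congr rfl fun b _ => by
      rw [support_ofSubtype, Finset.card_map, support_inst]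
  have hb : ∀ b : {s // s ∈ π.parts},
      numCycles (τ b) + (τ b).support.card
        = ((τ b).cycleType).card + (b : Finset (Fin n)).card := by
    intro b
    rw [numCycles_eq]
    have h1 := Finset.card_le_univ (τ b).support
    rw [Fintype.card_coe] at *
    omega
  have hsumcard : ∑ b : {s // s ∈ π.parts}, (b : Finset (Fin n)).card = n := by
    rw [Finset.sum_coe_sort π.parts (fun b => b.card), π.sum_card_parts,
      Finset.card_univ, Fintype.card_fin]
  have htot : ∑ b : {s // s ∈ π.parts}, (numCycles (τ b) + (τ b).support.card)
      = ∑ b : {s // s ∈ π.parts}, (((τ b).cycleType).card + (b : Finset (Fin n)).card) :=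
    Finset.sum_congr rfl fun b _ => hb b
  rw [Finset.sum_add_distrib, Finset.sum_add_distrib, hsumcard] at htot
  have hcards : ((glue π τ).cycleType).card
      = ∑ b : {s // s ∈ π.parts}, ((τ b).cycleType).card := by
    rw [hct, Multiset.card_sum]
  have hle := Finset.card_le_univ (glue π τ).support
  rw [numCycles_eq, hcards, hsupcard, Fintype.card_fin]
  rw [hsupcard, Fintype.card_fin] at hle
  omega

end glue

theorem aper_partitionMatrix (n : ℕ) (α : ℂ)
    (π : Finpartition (Finset.univ : Finset (Fin n))) :
    aper α (Matrix.of fun i j : Fin n => if j ∈ π.part i then (1 : ℂ) else 0) =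
      ∏ b ∈ π.parts, riseF α b.card := by
  classical
  unfold aper
  have hprod : ∀ σ : Perm (Fin n),
      (∏ j, (Matrix.of fun i j : Fin n => if j ∈ π.part i then (1:ℂ) else 0) j (σ j))
        = if (∀ j, σ j ∈ π.part j) then 1 else 0 := by
    intro σ
    by_cases h : ∀ j, σ j ∈ π.part j
    · rw [if_pos h]
      exact Finset.prod_eq_one fun j _ => by simp [Matrix.of_apply, h j]
    · rw [if_neg h]
      push_neg at h
      obtain ⟨j, hj⟩ := h
      exact Finset.prod_eq_zero (mem_univ j) (by simp [Matrix.of_apply, hj])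
  simp_rw [hprod, mul_ite, mul_one, mul_zero]
  rw [← Finset.sum_filter]
  have hRHS : ∏ b ∈ π.parts, riseF α b.card
      = ∏ b : {s // s ∈ π.parts}, (∑ e : Perm {x : Fin n // x ∈ (b : Finset (Fin n))},
          α ^ numCycles e) := by
    rw [← Finset.prod_coe_sort π.parts (fun b => riseF α b.card)]
    exact Fintype.prod_congr _ _ fun b =>
      (sum_pow_numCycles α (b : Finset (Fin n)).card _ (Fintype.card_coe _)).symm
  rw [hRHS, Finset.prod_univ_sum, Fintype.piFinset_univ]
  refine (Finset.sum_bij (fun (τ : PartPerm π) (_ : τ ∈ univ) => glue π τ)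
    ?_ ?_ ?_ ?_).symm
  · -- maps into filter
    intro τ _
    rw [Finset.mem_filter]
    refine ⟨Finset.mem_univ _, fun j => ?_⟩
    rw [glue_apply π τ (π.part_mem.2 (mem_univ j)) (π.mem_part (mem_univ j))]
    exact (τ _ _).2
  · -- injective
    intro τ1 _ τ2 _ hglue
    funext b
    refine Equiv.ext fun z => Subtype.ext ?_
    have h1 := glue_apply π τ1 b.2 z.2
    have h2 := glue_apply π τ2 b.2 z.2
    calc (↑(τ1 b z) : Fin n) = glue π τ1 ↑z := h1.symm
      _ = glue π τ2 ↑z := congrArg (fun g : Perm (Fin n) => g ↑z) hglue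
      _ = ↑(τ2 b z) := h2
  · -- surjective
    intro σ hσmem
    have hσ : ∀ j, σ j ∈ π.part j := (Finset.mem_filter.mp hσmem).2
    have hiff : ∀ b : {s // s ∈ π.parts}, ∀ x : Fin n,
        x ∈ (b : Finset (Fin n)) ↔ σ x ∈ (b : Finset (Fin n)) := by
      intro b x
      constructor
      · intro hx
        have h := hσ x
        rwa [π.part_eq_of_mem b.2 hx] at h
      · intro hx
        have heq : (b : Finset (Fin n)) = π.part x :=
          π.eq_of_mem_parts b.2 (π.part_mem.2 (mem_univ x)) hx (hσ x)
        rw [heq]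
        exact π.mem_part (mem_univ x)
    refine ⟨fun b => σ.subtypePerm (fun x => (hiff b x).symm), Finset.mem_univ _, ?_⟩
    refine Equiv.ext fun x => ?_
    rw [glue_apply π _ (π.part_mem.2 (mem_univ x)) (π.mem_part (mem_univ x))]
    rfl
  · -- values
    intro τ _
    rw [numCycles_glue, ← Finset.prod_pow_eq_pow_sum]
end

section
/- Let c(n,k,l) be the number of permutations of [n] with exactly k cycles and exactly l fixed points. Then for n ≥ 1 and all k, l, c(n+1,k,l) = c(n,k−1,l−1) + (n−l) · c(n,k,l) + (l+1) · c(n,k,l+1). -/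
open Finset

/-- Number of permutations of `Fin n` with exactly `k` cycles and exactly `l` fixed points. -/
def genRen (n k l : ℕ) : ℕ :=
  ((Finset.univ : Finset (Equiv.Perm (Fin n))).filter fun σ =>
    numCycles σ = k ∧ (Finset.univ.filter fun i => σ i = i).card = l).card
/-- `genRen` extended with value 0 at negative arguments. -/
def genRenZ (n : ℕ) (k l : ℤ) : ℤ :=
  if 0 ≤ k ∧ 0 ≤ l then genRen n k.toNat l.toNat else 0

section Aux
open Equiv Equiv.Perm


variable {α : Type*} [Fintype α] [DecidableEq α]

lemma support_swap_mul' {g : Perm α} {a b : α} (ha : g a = a) (hb : g b ≠ b) :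
    (Equiv.swap a b * g).support = insert a g.support := by
  have hab : a ≠ b := fun h => hb (h ▸ ha)
  ext x
  simp only [Perm.mem_support, Finset.mem_insert, Perm.mul_apply]
  rcases eq_or_ne x a with rfl | hxa
  · simp [ha, Equiv.swap_apply_left, hab.symm, hab]
  · constructor
    · intro h
      right
      intro hgx
      apply h
      rw [hgx]
      apply Equiv.swap_apply_of_ne_of_ne hxa
      rintro rfl; exact hb hgx
    · rintro (rfl | hgx)
      · exact absurd rfl hxa
      · rcases eq_or_ne (g x) a with hga | hga
        · exact absurd (g.injective (hga.trans ha.symm)) hxa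
        rcases eq_or_ne (g x) b with hgb | hgb
        · rw [hgb, Equiv.swap_apply_right]; exact hxa.symm
        · rw [Equiv.swap_apply_of_ne_of_ne hga hgb]; exact hgx

lemma isCycle_insert {c : Perm α} (hc : c.IsCycle) {a b : α} (ha : c a = a) (hb : c b ≠ b) :
    (Equiv.swap a b * c).IsCycle := by
  have hab : a ≠ b := fun h => hb (h ▸ ha)
  set f := Equiv.swap a b * c with hf
  have hfa : f a = b := by rw [hf, Perm.mul_apply, ha, Equiv.swap_apply_left]
  have hfa' : f a ≠ a := by rw [hfa]; exact hab.symm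
  rw [Equiv.Perm.isCycle_iff_sameCycle hfa']
  intro y
  constructor
  · rintro hsc hy
    obtain ⟨j, hj⟩ := hsc.symm
    rw [Equiv.Perm.zpow_apply_eq_self_of_apply_eq_self hy] at hj
    exact hfa' (hj ▸ hy)
  · intro hy
    have hsupp : y ∈ insert a c.support := by
      rw [← support_swap_mul' ha hb, Perm.mem_support]; exact hy
    rcases Finset.mem_insert.mp hsupp with rfl | hy'
    · exact Equiv.Perm.SameCycle.refl _ _
    -- walking claim
    have key : ∀ j : ℕ, (∀ i : ℕ, 0 < i → i ≤ j → (c ^ i) b ≠ b) →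
        (f ^ (j + 1)) a = (c ^ j) b := by
      intro j
      induction j with
      | zero => intro _; simpa using hfa
      | succ j ih =>
        intro hyp
        have h1 : (f ^ (j + 1)) a = (c ^ j) b :=
          ih fun i hi hij => hyp i hi (hij.trans (Nat.le_succ j))
        have hcb : (c ^ j) b ∈ c.support := Equiv.Perm.pow_apply_mem_support.mpr (Perm.mem_support.mpr hb)
        have hcb' : (c ^ (j + 1)) b ∈ c.support := Equiv.Perm.pow_apply_mem_support.mpr (Perm.mem_support.mpr hb)
        have hca : a ∉ c.support := by rw [Perm.mem_support]; exact fun h => h ha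
        rw [pow_succ', Perm.mul_apply, h1, hf, Perm.mul_apply]
        have : c ((c ^ j) b) = (c ^ (j + 1)) b := by
          rw [pow_succ', Perm.mul_apply]
        rw [this]
        apply Equiv.swap_apply_of_ne_of_ne
        · exact fun h => hca (h ▸ hcb')
        · exact hyp (j + 1) (Nat.succ_pos j) le_rfl
    obtain ⟨i, hi⟩ := hc.exists_pow_eq hb (Perm.mem_support.mp hy')
    set m := orderOf c with hm
    have hmpos : 0 < m := orderOf_pos c
    have hcj : (c ^ (i % m)) b = y := by rw [pow_mod_orderOf]; exact hi
    have hyp : ∀ i' : ℕ, 0 < i' → i' ≤ i % m → (c ^ i') b ≠ b := by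
      intro i' hi'pos hi'le hbi
      have : c ^ i' = 1 := (hc.pow_eq_one_iff' hb).mpr hbi
      have hdvd : m ∣ i' := orderOf_dvd_of_pow_eq_one this
      have : m ≤ i' := Nat.le_of_dvd hi'pos hdvd
      have : i % m < m := Nat.mod_lt _ hmpos
      omega
    refine ⟨((i % m : ℕ) + 1 : ℕ), ?_⟩
    rw [zpow_natCast]
    rw [key (i % m) hyp]
    exact hcj

lemma card_cycleFactors_swap_mul {g : Perm α} {a b : α} (ha : g a = a) (hb : g b ≠ b) :
    (Equiv.swap a b * g).cycleFactorsFinset.card = g.cycleFactorsFinset.card := by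
  have hab : a ≠ b := fun h => hb (h ▸ ha)
  have hag : a ∉ g.support := by rw [Perm.mem_support]; exact fun h => h ha
  symm
  apply Finset.card_bij (fun c _ => if b ∈ c.support then Equiv.swap a b * c else c)
  · -- maps into
    intro c hc
    rw [Equiv.Perm.mem_cycleFactorsFinset_iff] at hc
    obtain ⟨hcyc, hagree⟩ := hc
    have hsub : c.support ⊆ g.support := Equiv.Perm.mem_cycleFactorsFinset_support_le
      (Equiv.Perm.mem_cycleFactorsFinset_iff.mpr ⟨hcyc, hagree⟩)
    have hca : c a = a := by
      rw [← Perm.notMem_support] at ha ⊢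
      exact fun h => hag (hsub h)
    by_cases hbc : b ∈ c.support
    · rw [if_pos hbc]
      have hcb : c b ≠ b := Perm.mem_support.mp hbc
      rw [Equiv.Perm.mem_cycleFactorsFinset_iff]
      refine ⟨isCycle_insert hcyc hca hcb, ?_⟩
      intro x hx
      rw [support_swap_mul' hca hcb] at hx
      rcases Finset.mem_insert.mp hx with rfl | hx'
      · simp [Perm.mul_apply, hca, ha]
      · simp only [Perm.mul_apply]
        rw [hagree x hx']
    · rw [if_neg hbc]
      rw [Equiv.Perm.mem_cycleFactorsFinset_iff]
      refine ⟨hcyc, ?_⟩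
      intro x hx
      rw [hagree x hx, Perm.mul_apply]
      have hgx1 : g x ≠ a := by
        intro h
        exact (Perm.mem_support.mp hx) (by
          have : x = a := g.injective (h.trans ha.symm)
          subst this
          exact (hca))
      have hgx2 : g x ≠ b := by
        intro h
        apply hbc
        rw [← hagree x hx] at h
        rw [← h]
        exact Equiv.Perm.apply_mem_support.mpr hx
      rw [Equiv.swap_apply_of_ne_of_ne hgx1 hgx2]
  · -- injective
    intro c₁ hc₁ c₂ hc₂ heq
    have hain : ∀ c, c ∈ g.cycleFactorsFinset → a ∉ c.support := fun c hc h =>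
      hag (Equiv.Perm.mem_cycleFactorsFinset_support_le hc h)
    by_cases h1 : b ∈ c₁.support <;> by_cases h2 : b ∈ c₂.support
    · rw [if_pos h1, if_pos h2] at heq
      exact mul_left_cancel heq
    · rw [if_pos h1, if_neg h2] at heq
      exfalso
      have hca : c₁ a = a := Perm.notMem_support.mp (hain c₁ hc₁)
      have : a ∈ (Equiv.swap a b * c₁).support := by
        rw [support_swap_mul' hca (Perm.mem_support.mp h1)]
        exact Finset.mem_insert_self a _
      rw [heq] at this
      exact hain c₂ hc₂ this
    · rw [if_neg h1, if_pos h2] at heq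
      exfalso
      have hca : c₂ a = a := Perm.notMem_support.mp (hain c₂ hc₂)
      have : a ∈ (Equiv.swap a b * c₂).support := by
        rw [support_swap_mul' hca (Perm.mem_support.mp h2)]
        exact Finset.mem_insert_self a _
      rw [← heq] at this
      exact hain c₁ hc₁ this
    · rw [if_neg h1, if_neg h2] at heq
      exact heq
  · -- surjective
    intro d hd
    rw [Equiv.Perm.mem_cycleFactorsFinset_iff] at hd
    obtain ⟨hdcyc, hdagree⟩ := hd
    by_cases had : a ∈ d.support
    · -- d contains a; remove it
      have hda : d a = b := by
        rw [hdagree a had, Perm.mul_apply, ha, Equiv.swap_apply_left]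
      have hbd : b ∈ d.support := by rw [← hda]; exact Equiv.Perm.apply_mem_support.mpr had
      have hdb : d b ≠ b := Perm.mem_support.mp hbd
      have hgb : g b ≠ b := hb
      have hgba : g b ≠ a := fun h => hab (g.injective (ha.symm ▸ h ▸ rfl)).symm
      have hdbval : d b = g b := by
        rw [hdagree b hbd, Perm.mul_apply, Equiv.swap_apply_of_ne_of_ne hgba hgb]
      have hdba : d b ≠ a := by rw [hdbval]; exact hgba
      set c := Equiv.swap a b * d with hcdef
      have hccyc : c.IsCycle := by
        have := hdcyc.swap_mul (x := a) (by rw [hda]; exact hab.symm) (by rw [hda]; exact hdba)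
        rwa [hda] at this
      have hca : c a = a := by rw [hcdef, Perm.mul_apply, hda, Equiv.swap_apply_right]
      have hcb : c b ≠ b := by
        rw [hcdef, Perm.mul_apply, Equiv.swap_apply_of_ne_of_ne hdba hdb]
        exact hdb
      have hdc : Equiv.swap a b * c = d := by
        rw [hcdef, ← mul_assoc, Equiv.swap_mul_self, one_mul]
      have hsupp : d.support = insert a c.support := by
        rw [← hdc]; exact support_swap_mul' hca hcb
      have hcmem : c ∈ g.cycleFactorsFinset := by
        rw [Equiv.Perm.mem_cycleFactorsFinset_iff]
        refine ⟨hccyc, ?_⟩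
        intro x hx
        have hxa : x ≠ a := fun h => (Perm.mem_support.mp (h ▸ hx)) hca
        have hxd : x ∈ d.support := by rw [hsupp]; exact Finset.mem_insert_of_mem hx
        rw [hcdef, Perm.mul_apply, hdagree x hxd, Perm.mul_apply, Equiv.swap_apply_self]
      refine ⟨c, hcmem, ?_⟩
      rw [if_pos (Perm.mem_support.mpr hcb), hdc]
    · -- a not in d
      have hbd : b ∉ d.support := by
        intro hbd
        have hx0 : d⁻¹ b ∈ d.support := by
          rw [← Equiv.Perm.apply_mem_support (x := d⁻¹ b), ((Equiv.eq_symm_apply d).mp rfl : d (d⁻¹ b) = b)]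
          exact hbd
        have : d (d⁻¹ b) = (Equiv.swap a b * g) (d⁻¹ b) := hdagree _ hx0
        rw [((Equiv.eq_symm_apply d).mp rfl : d (d⁻¹ b) = b)] at this
        have hta : (Equiv.swap a b * g) a = b := by
          rw [Perm.mul_apply, ha, Equiv.swap_apply_left]
        have : d⁻¹ b = a := by
          apply (Equiv.swap a b * g).injective
          rw [← this, hta]
        rw [this] at hx0
        exact had hx0
      refine ⟨d, ?_, by rw [if_neg hbd]⟩
      rw [Equiv.Perm.mem_cycleFactorsFinset_iff]
      refine ⟨hdcyc, ?_⟩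
      intro x hx
      have hdx := hdagree x hx
      have hgxa : g x ≠ a := by
        intro h
        have : x = a := g.injective (h.trans ha.symm)
        exact had (this ▸ hx)
      have hgxb : g x ≠ b := by
        intro h
        have : d x = a := by rw [hdx, Perm.mul_apply, h, Equiv.swap_apply_right]
        apply had
        rw [← this]
        exact Equiv.Perm.apply_mem_support.mpr hx
      rw [hdx, Perm.mul_apply, Equiv.swap_apply_of_ne_of_ne hgxa hgxb]



lemma fixCount_eq (σ : Perm α) :
    (Finset.univ.filter fun i => σ i = i).card = Fintype.card α - σ.support.card := by
  have h := Finset.card_filter_add_card_filter_not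
    (s := (Finset.univ : Finset α)) (p := fun i => σ i = i)
  rw [Finset.card_univ] at h
  have hsupp : σ.support.card = (Finset.univ.filter fun i => ¬ σ i = i).card := rfl
  have hle : σ.support.card ≤ Fintype.card α := σ.support.card_le_univ.trans_eq Finset.card_univ
  omega

lemma cycleType_card_eq (σ : Perm α) :
    σ.cycleType.card = σ.cycleFactorsFinset.card := by
  rw [Equiv.Perm.cycleType_def, Multiset.card_map]
  rfl

def succEquiv (n : ℕ) : Fin n ≃ {x : Fin (n + 1) // x ≠ 0} where
  toFun x := ⟨x.succ, x.succ_ne_zero⟩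
  invFun y := (y : Fin (n + 1)).pred y.2
  left_inv x := by simp
  right_inv y := by simp

lemma decomposeFin_zero {n : ℕ} (e : Perm (Fin n)) :
    Equiv.Perm.decomposeFin.symm (0, e) = e.extendDomain (succEquiv n) := by
  ext x
  refine Fin.cases ?_ (fun i => ?_) x
  · rw [Equiv.Perm.decomposeFin_symm_apply_zero,
      Equiv.Perm.extendDomain_apply_not_subtype _ _ (by simp)]
  · rw [Equiv.Perm.decomposeFin_symm_apply_succ]
    have : (i.succ : Fin (n+1)) = ((succEquiv n i : {x : Fin (n+1) // x ≠ 0}) : Fin (n+1)) := rfl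
    rw [this, Equiv.Perm.extendDomain_apply_image]
    simp [succEquiv]

lemma decomposeFin_succ {n : ℕ} (e : Perm (Fin n)) (q : Fin n) :
    Equiv.Perm.decomposeFin.symm (q.succ, e) =
      Equiv.swap 0 q.succ * Equiv.Perm.decomposeFin.symm (0, e) := by
  ext x
  refine Fin.cases ?_ (fun i => ?_) x
  · simp
  · rw [Equiv.Perm.decomposeFin_symm_apply_succ, Perm.mul_apply,
      Equiv.Perm.decomposeFin_symm_apply_succ]
    simp

lemma tau0_apply_succ {n : ℕ} (e : Perm (Fin n)) (i : Fin n) :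
    Equiv.Perm.decomposeFin.symm (0, e) i.succ = (e i).succ := by
  rw [Equiv.Perm.decomposeFin_symm_apply_succ]
  simp

lemma tau0_cycleType {n : ℕ} (e : Perm (Fin n)) :
    (Equiv.Perm.decomposeFin.symm (0, e)).cycleType = e.cycleType := by
  rw [decomposeFin_zero]
  exact Equiv.Perm.cycleType_extendDomain _

lemma tau0_support_card {n : ℕ} (e : Perm (Fin n)) :
    (Equiv.Perm.decomposeFin.symm (0, e)).support.card = e.support.card := by
  rw [decomposeFin_zero]
  exact Equiv.Perm.card_support_extend_domain _

lemma countA {n : ℕ} (e : Perm (Fin n)) :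
    numCycles (Equiv.Perm.decomposeFin.symm (0, e)) = numCycles e + 1 ∧
    (Finset.univ.filter fun i => Equiv.Perm.decomposeFin.symm (0, e) i = i).card =
      (Finset.univ.filter fun i => e i = i).card + 1 := by
  have hse : e.support.card ≤ n := e.support.card_le_univ.trans_eq (by simp)
  have h1 := fixCount_eq (Equiv.Perm.decomposeFin.symm (0, e))
  have h2 := fixCount_eq e
  rw [Fintype.card_fin] at h1 h2
  rw [tau0_support_card] at h1
  have hfix : (Finset.univ.filter fun i => Equiv.Perm.decomposeFin.symm (0, e) i = i).card =
      (Finset.univ.filter fun i => e i = i).card + 1 := by omega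
  refine ⟨?_, hfix⟩
  unfold numCycles
  rw [tau0_cycleType, hfix]
  omega

lemma countB {n : ℕ} (e : Perm (Fin n)) (q : Fin n) (hq : e q = q) :
    numCycles (Equiv.Perm.decomposeFin.symm (q.succ, e)) = numCycles e ∧
    (Finset.univ.filter fun i => Equiv.Perm.decomposeFin.symm (q.succ, e) i = i).card + 1 =
      (Finset.univ.filter fun i => e i = i).card := by
  set τ₀ := Equiv.Perm.decomposeFin.symm (0, e) with hτ₀
  have h0ne : (0 : Fin (n+1)) ≠ q.succ := (q.succ_ne_zero).symm
  have ht0 : τ₀ 0 = 0 := Equiv.Perm.decomposeFin_symm_apply_zero 0 e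
  have htq : τ₀ q.succ = q.succ := by rw [hτ₀, tau0_apply_succ, hq]
  have hdisj : (Equiv.swap (0 : Fin (n+1)) q.succ).Disjoint τ₀ := by
    intro x
    rcases eq_or_ne x 0 with rfl | hx0
    · right; exact ht0
    rcases eq_or_ne x q.succ with rfl | hxq
    · right; exact htq
    · left; exact Equiv.swap_apply_of_ne_of_ne hx0 hxq
  have heq : Equiv.Perm.decomposeFin.symm (q.succ, e) = Equiv.swap 0 q.succ * τ₀ :=
    decomposeFin_succ e q
  have hct : (Equiv.Perm.decomposeFin.symm (q.succ, e)).cycleType.card =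
      e.cycleType.card + 1 := by
    rw [heq, hdisj.cycleType_mul, Multiset.card_add, (Equiv.Perm.isCycle_swap h0ne).cycleType,
      hτ₀, tau0_cycleType]
    simp [add_comm]
  have hsc : (Equiv.Perm.decomposeFin.symm (q.succ, e)).support.card =
      e.support.card + 2 := by
    rw [heq, hdisj.support_mul, Finset.card_union_of_disjoint hdisj.disjoint_support,
      Equiv.Perm.card_support_swap h0ne, hτ₀, tau0_support_card]
    omega
  have hse : e.support.card < n := by
    have hqn : q ∉ e.support := by rw [Perm.mem_support]; exact fun h => h hq
    have : e.support ≠ Finset.univ := fun h => hqn (h ▸ Finset.mem_univ q)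
    calc e.support.card < (Finset.univ : Finset (Fin n)).card :=
          Finset.card_lt_card (Finset.ssubset_univ_iff.mpr this)
      _ = n := by simp
  have h1 := fixCount_eq (Equiv.Perm.decomposeFin.symm (q.succ, e))
  have h2 := fixCount_eq e
  rw [Fintype.card_fin] at h1 h2
  rw [hsc] at h1
  constructor
  · unfold numCycles
    omega
  · omega

lemma countC {n : ℕ} (e : Perm (Fin n)) (q : Fin n) (hq : e q ≠ q) :
    numCycles (Equiv.Perm.decomposeFin.symm (q.succ, e)) = numCycles e ∧
    (Finset.univ.filter fun i => Equiv.Perm.decomposeFin.symm (q.succ, e) i = i).card =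
      (Finset.univ.filter fun i => e i = i).card := by
  set τ₀ := Equiv.Perm.decomposeFin.symm (0, e) with hτ₀
  have ht0 : τ₀ 0 = 0 := Equiv.Perm.decomposeFin_symm_apply_zero 0 e
  have htq : τ₀ q.succ ≠ q.succ := by
    rw [hτ₀, tau0_apply_succ]
    exact fun h => hq (Fin.succ_injective n h)
  have heq : Equiv.Perm.decomposeFin.symm (q.succ, e) = Equiv.swap 0 q.succ * τ₀ :=
    decomposeFin_succ e q
  have hK : (Equiv.Perm.decomposeFin.symm (q.succ, e)).cycleType.card =
      e.cycleType.card := by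
    rw [heq, cycleType_card_eq, card_cycleFactors_swap_mul ht0 htq, ← cycleType_card_eq,
      hτ₀, tau0_cycleType]
  have h0supp : (0 : Fin (n+1)) ∉ τ₀.support := by
    rw [Perm.mem_support]; exact fun h => h ht0
  have hsc : (Equiv.Perm.decomposeFin.symm (q.succ, e)).support.card =
      e.support.card + 1 := by
    rw [heq, support_swap_mul' ht0 htq, Finset.card_insert_of_notMem h0supp,
      hτ₀, tau0_support_card]
  have hse : e.support.card ≤ n := e.support.card_le_univ.trans_eq (by simp)
  have h1 := fixCount_eq (Equiv.Perm.decomposeFin.symm (q.succ, e))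
  have h2 := fixCount_eq e
  rw [Fintype.card_fin] at h1 h2
  rw [hsc] at h1
  constructor
  · unfold numCycles
    omega
  · omega

lemma key_sum_s16 (m k' l' : ℕ) : (genRen m k' l' : ℤ) =
    ∑ e : Perm (Fin m), if numCycles e = k' ∧
      (Finset.univ.filter fun i => e i = i).card = l' then (1 : ℤ) else 0 := by
  rw [genRen, Finset.card_filter]
  push_cast
  rfl

lemma main_rec (n k l : ℕ) :
    (genRen (n + 1) k l : ℤ) =
      genRenZ n ((k : ℤ) - 1) ((l : ℤ) - 1) + ((n : ℤ) - l) * genRen n k l +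
        ((l : ℤ) + 1) * genRen n k (l + 1) := by
  classical
  have step1 : (genRen (n + 1) k l : ℤ) =
      ∑ e : Perm (Fin n), ∑ p : Fin (n + 1),
        (if numCycles (Equiv.Perm.decomposeFin.symm (p, e)) = k ∧
            (Finset.univ.filter fun i =>
              Equiv.Perm.decomposeFin.symm (p, e) i = i).card = l then (1 : ℤ) else 0) := by
    rw [key_sum_s16]
    rw [← Equiv.sum_comp (Equiv.Perm.decomposeFin (n := n)).symm
      (fun σ : Perm (Fin (n + 1)) => if numCycles σ = k ∧
        (Finset.univ.filter fun i => σ i = i).card = l then (1 : ℤ) else 0)]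
    rw [Fintype.sum_prod_type]
    exact Finset.sum_comm
  have step2 : ∀ e : Perm (Fin n),
      (∑ p : Fin (n + 1),
        (if numCycles (Equiv.Perm.decomposeFin.symm (p, e)) = k ∧
            (Finset.univ.filter fun i =>
              Equiv.Perm.decomposeFin.symm (p, e) i = i).card = l then (1 : ℤ) else 0)) =
      (if numCycles e + 1 = k ∧ (Finset.univ.filter fun i => e i = i).card + 1 = l
        then (1 : ℤ) else 0)
      + ((Finset.univ.filter fun i => e i = i).card : ℤ) *
        (if numCycles e = k ∧ (Finset.univ.filter fun i => e i = i).card = l + 1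
          then (1 : ℤ) else 0)
      + ((n : ℤ) - (Finset.univ.filter fun i => e i = i).card) *
        (if numCycles e = k ∧ (Finset.univ.filter fun i => e i = i).card = l
          then (1 : ℤ) else 0) := by
    intro e
    rw [Fin.sum_univ_succ]
    have h0 : (if numCycles (Equiv.Perm.decomposeFin.symm ((0 : Fin (n+1)), e)) = k ∧
        (Finset.univ.filter fun i =>
          Equiv.Perm.decomposeFin.symm ((0 : Fin (n+1)), e) i = i).card = l
        then (1 : ℤ) else 0) =
        (if numCycles e + 1 = k ∧ (Finset.univ.filter fun i => e i = i).card + 1 = l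
          then (1 : ℤ) else 0) := by
      obtain ⟨h1, h2⟩ := countA e
      rw [h1, h2]
    rw [h0]
    rw [add_assoc]
    congr 1
    rw [← Finset.sum_filter_add_sum_filter_not Finset.univ (fun q => e q = q)]
    congr 1
    · have hcongr : ∀ q ∈ Finset.univ.filter (fun q => e q = q),
          (if numCycles (Equiv.Perm.decomposeFin.symm (q.succ, e)) = k ∧
            (Finset.univ.filter fun i =>
              Equiv.Perm.decomposeFin.symm (q.succ, e) i = i).card = l then (1 : ℤ) else 0) =
          (if numCycles e = k ∧ (Finset.univ.filter fun i => e i = i).card = l + 1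
            then (1 : ℤ) else 0) := by
        intro q hq
        obtain ⟨h1, h2⟩ := countB e q ((Finset.mem_filter.mp hq).2)
        refine if_congr ?_ rfl rfl
        rw [h1]
        constructor
        · rintro ⟨hk, hl⟩; exact ⟨hk, by omega⟩
        · rintro ⟨hk, hl⟩; exact ⟨hk, by omega⟩
      rw [Finset.sum_congr rfl hcongr, Finset.sum_const, nsmul_eq_mul]
    · have hcongr : ∀ q ∈ Finset.univ.filter (fun q => ¬ e q = q),
          (if numCycles (Equiv.Perm.decomposeFin.symm (q.succ, e)) = k ∧
            (Finset.univ.filter fun i =>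
              Equiv.Perm.decomposeFin.symm (q.succ, e) i = i).card = l then (1 : ℤ) else 0) =
          (if numCycles e = k ∧ (Finset.univ.filter fun i => e i = i).card = l
            then (1 : ℤ) else 0) := by
        intro q hq
        obtain ⟨h1, h2⟩ := countC e q ((Finset.mem_filter.mp hq).2)
        refine if_congr ?_ rfl rfl
        rw [h1, h2]
      rw [Finset.sum_congr rfl hcongr, Finset.sum_const, nsmul_eq_mul]
      congr 1
      have h := Finset.card_filter_add_card_filter_not
        (s := (Finset.univ : Finset (Fin n))) (p := fun q => e q = q)
      rw [Finset.card_univ, Fintype.card_fin] at h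
      omega
  rw [step1, Finset.sum_congr rfl (fun e _ => step2 e)]
  rw [Finset.sum_add_distrib, Finset.sum_add_distrib]
  have hT0 : (∑ e : Perm (Fin n), if numCycles e + 1 = k ∧
      (Finset.univ.filter fun i => e i = i).card + 1 = l then (1 : ℤ) else 0) =
      genRenZ n ((k : ℤ) - 1) ((l : ℤ) - 1) := by
    match k, l with
    | 0, l => simp [genRenZ]
    | k' + 1, 0 => simp [genRenZ]
    | k' + 1, l' + 1 =>
      have hcond : ∀ e : Perm (Fin n),
          (numCycles e + 1 = k' + 1 ∧ (Finset.univ.filter fun i => e i = i).card + 1 = l' + 1)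
          ↔ (numCycles e = k' ∧ (Finset.univ.filter fun i => e i = i).card = l') := by
        intro e; omega
      rw [Finset.sum_congr rfl (fun e _ => if_congr (hcond e) rfl rfl), ← key_sum_s16]
      have h1 : ((k' + 1 : ℕ) : ℤ) - 1 = (k' : ℤ) := by push_cast; ring
      have h2 : ((l' + 1 : ℕ) : ℤ) - 1 = (l' : ℤ) := by push_cast; ring
      rw [h1, h2, genRenZ, if_pos ⟨Int.natCast_nonneg _, Int.natCast_nonneg _⟩]
      simp
  have hT1 : (∑ e : Perm (Fin n), ((Finset.univ.filter fun i => e i = i).card : ℤ) *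
      (if numCycles e = k ∧ (Finset.univ.filter fun i => e i = i).card = l + 1
        then (1 : ℤ) else 0)) = ((l : ℤ) + 1) * genRen n k (l + 1) := by
    have hcongr : ∀ e : Perm (Fin n), ((Finset.univ.filter fun i => e i = i).card : ℤ) *
        (if numCycles e = k ∧ (Finset.univ.filter fun i => e i = i).card = l + 1
          then (1 : ℤ) else 0) = ((l : ℤ) + 1) *
        (if numCycles e = k ∧ (Finset.univ.filter fun i => e i = i).card = l + 1
          then (1 : ℤ) else 0) := by
      intro e
      by_cases h : numCycles e = k ∧ (Finset.univ.filter fun i => e i = i).card = l + 1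
      · rw [if_pos h, h.2]; push_cast; ring
      · rw [if_neg h]; ring
    rw [Finset.sum_congr rfl (fun e _ => hcongr e), ← Finset.mul_sum, ← key_sum_s16]
  have hT2 : (∑ e : Perm (Fin n),
      ((n : ℤ) - (Finset.univ.filter fun i => e i = i).card) *
      (if numCycles e = k ∧ (Finset.univ.filter fun i => e i = i).card = l
        then (1 : ℤ) else 0)) = ((n : ℤ) - l) * genRen n k l := by
    have hcongr : ∀ e : Perm (Fin n),
        ((n : ℤ) - (Finset.univ.filter fun i => e i = i).card) *
        (if numCycles e = k ∧ (Finset.univ.filter fun i => e i = i).card = l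
          then (1 : ℤ) else 0) = ((n : ℤ) - l) *
        (if numCycles e = k ∧ (Finset.univ.filter fun i => e i = i).card = l
          then (1 : ℤ) else 0) := by
      intro e
      by_cases h : numCycles e = k ∧ (Finset.univ.filter fun i => e i = i).card = l
      · rw [if_pos h, h.2]
      · rw [if_neg h]; ring
    rw [Finset.sum_congr rfl (fun e _ => hcongr e), ← Finset.mul_sum, ← key_sum_s16]
  rw [hT0, hT1, hT2]
  ring


end Aux

theorem genRen_recursion (n : ℕ) (hn : 1 ≤ n) (k l : ℤ) :
    genRenZ (n + 1) k l =
      genRenZ n (k - 1) (l - 1) + ((n : ℤ) - l) * genRenZ n k l +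
        (l + 1) * genRenZ n k (l + 1) := by
  by_cases hk : 0 ≤ k
  · by_cases hl : 0 ≤ l
    · obtain ⟨k', rfl⟩ := Int.eq_ofNat_of_zero_le hk
      obtain ⟨l', rfl⟩ := Int.eq_ofNat_of_zero_le hl
      have e1 : genRenZ (n + 1) (k' : ℤ) (l' : ℤ) = genRen (n + 1) k' l' := by
        rw [genRenZ, if_pos ⟨Int.natCast_nonneg _, Int.natCast_nonneg _⟩]; simp
      have e2 : genRenZ n (k' : ℤ) (l' : ℤ) = genRen n k' l' := by
        rw [genRenZ, if_pos ⟨Int.natCast_nonneg _, Int.natCast_nonneg _⟩]; simp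
      have e3 : genRenZ n (k' : ℤ) ((l' : ℤ) + 1) = genRen n k' (l' + 1) := by
        have h : ((l' : ℤ) + 1) = ((l' + 1 : ℕ) : ℤ) := by push_cast; ring
        rw [h, genRenZ, if_pos ⟨Int.natCast_nonneg _, Int.natCast_nonneg _⟩]; simp
      rw [e1, e2, e3, main_rec n k' l']
    · push_neg at hl
      have h1 : genRenZ (n + 1) k l = 0 := if_neg (by omega)
      have h2 : genRenZ n (k - 1) (l - 1) = 0 := if_neg (by omega)
      have h3 : genRenZ n k l = 0 := if_neg (by omega)
      rw [h1, h2, h3]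
      rcases eq_or_ne l (-1) with rfl | hne
      · ring_nf
      · have h4 : genRenZ n k (l + 1) = 0 := if_neg (by omega)
        rw [h4]; ring
  · push_neg at hk
    have h1 : genRenZ (n + 1) k l = 0 := if_neg (by omega)
    have h2 : genRenZ n (k - 1) (l - 1) = 0 := if_neg (by omega)
    have h3 : genRenZ n k l = 0 := if_neg (by omega)
    have h4 : genRenZ n k (l + 1) = 0 := if_neg (by omega)
    rw [h1, h2, h3, h4]; ring
end
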